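/- arXiv:1810.06354 — 5 statements merged into one kernel-verified Lean document; each statement's English description precedes it below -/
import Mathlib

section
/- For every integer m ≥ 3, the independence number of the pair graph of the path P_m equals ⌊(m+1)²/4⌋. -/
/-- The independence number of a graph: the supremum of sizes of independent sets. -/
noncomputable def indepNum {V : Type*} (G : SimpleGraph V) : ℕ :=
  sSup {n | ∃ s : Finset V, s.card = n ∧ ∀ a ∈ s, ∀ b ∈ s, ¬ G.Adj a b}

/-- The path graph on `n` vertices `0, 1, ..., n-1`. -/
def pathG (n : ℕ) : SimpleGraph (Fin n) :=
  SimpleGraph.fromRel (fun i j => (i : ℕ) + 1 = (j : ℕ))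

/-- The cycle graph on `n` vertices `0, 1, ..., n-1`. -/
def cycleG (n : ℕ) : SimpleGraph (Fin n) :=
  SimpleGraph.fromRel (fun i j => (i : ℕ) + 1 = (j : ℕ) ∨ ((i : ℕ) = 0 ∧ (j : ℕ) = n - 1))

/-- The join of a graph `G` with a single extra vertex. -/
def joinK1 {V : Type*} (G : SimpleGraph V) : SimpleGraph (V ⊕ Unit) :=
  SimpleGraph.fromRel (fun a b =>
    (∃ x y, G.Adj x y ∧ a = Sum.inl x ∧ b = Sum.inl y) ∨ (a.isLeft ∧ b.isRight))

/-- The fan graph `F_{m,1} = P_m + K_1`. -/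
def fanG (m : ℕ) : SimpleGraph (Fin m ⊕ Unit) := joinK1 (pathG m)

/-- The wheel graph `W_{m,1} = C_m + K_1`. -/
def wheelG (m : ℕ) : SimpleGraph (Fin m ⊕ Unit) := joinK1 (cycleG m)

/-- The `k`-token graph: vertices are `k`-subsets of `V(G)`, two subsets adjacent
whenever their symmetric difference is an edge of `G`. -/
def tokenGraph {V : Type*} [DecidableEq V] (k : ℕ) (G : SimpleGraph V) :
    SimpleGraph {A : Finset V // A.card = k} :=
  SimpleGraph.fromRel (fun A B => ∃ a b : V, G.Adj a b ∧ symmDiff A.1 B.1 = {a, b})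

/-- The double vertex graph `G^(2)`: the `2`-token graph of `G`. -/
def doubleVertexGraph {V : Type*} [DecidableEq V] (G : SimpleGraph V) :
    SimpleGraph {A : Finset V // A.card = 2} :=
  tokenGraph 2 G

/-- The pair graph (complete double vertex graph) `C(G)`: vertices are the 2-multisets
of `V(G)`; `{a,x}` and `{a,y}` (distinct) are adjacent iff `x` and `y` are adjacent in `G`. -/
def pairGraph {V : Type*} (G : SimpleGraph V) : SimpleGraph (Sym2 V) :=
  SimpleGraph.fromRel (fun s t => ∃ a x y : V, G.Adj x y ∧ s = s(a, x) ∧ t = s(a, y))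



open Finset

/-- The even cells of the triangle. -/
def Tset (m : ℕ) : Finset (ℕ × ℕ) :=
  (range m ×ˢ range m).filter fun p => p.1 ≤ p.2 ∧ (p.1 + p.2) % 2 = 0

lemma mem_Tset {m : ℕ} {p : ℕ × ℕ} :
    p ∈ Tset m ↔ p.1 < m ∧ p.2 < m ∧ p.1 ≤ p.2 ∧ (p.1 + p.2) % 2 = 0 := by
  simp [Tset, Finset.mem_filter, Finset.mem_product, and_assoc]

lemma card_col (m : ℕ) :
    ((range (m+1)).filter fun i => (i + m) % 2 = 0).card = m / 2 + 1 := by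
  have h : ((range (m+1)).filter fun i => (i + m) % 2 = 0)
      = (range (m/2+1)).image (fun k => m - 2*k) := by
    ext i
    simp only [Finset.mem_filter, Finset.mem_range, Finset.mem_image]
    constructor
    · rintro ⟨h1, h2⟩
      exact ⟨(m - i)/2, by omega, by omega⟩
    · rintro ⟨k, hk, rfl⟩
      omega
  rw [h, Finset.card_image_of_injOn, Finset.card_range]
  intro a ha b hb hab
  simp only [Finset.mem_coe, Finset.mem_range] at ha hb
  dsimp only at hab
  omega

lemma Tset_succ (m : ℕ) :
    Tset (m+1) = Tset m ∪ ((range (m+1)).filter fun i => (i + m) % 2 = 0).image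
      (fun i => (i, m)) := by
  ext ⟨a, b⟩
  simp only [mem_Tset, Finset.mem_union, Finset.mem_image, Finset.mem_filter,
    Finset.mem_range, Prod.mk.injEq]
  constructor
  · rintro ⟨h1, h2, h3, h4⟩
    rcases Nat.lt_or_ge b m with hb | hb
    · exact Or.inl ⟨by omega, hb, h3, h4⟩
    · exact Or.inr ⟨a, ⟨by omega, by omega⟩, rfl, by omega⟩
  · rintro (⟨h1, h2, h3, h4⟩ | ⟨i, ⟨hi1, hi2⟩, rfl, rfl⟩)
    · exact ⟨by omega, by omega, h3, h4⟩
    · exact ⟨by omega, by omega, by omega, by omega⟩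

lemma card_Tset_key (m : ℕ) : 4 * (Tset m).card + (m+1) % 2 = (m+1)^2 := by
  induction m with
  | zero => decide
  | succ m ih =>
    have hdisj : Disjoint (Tset m)
        (((range (m+1)).filter fun i => (i + m) % 2 = 0).image (fun i => (i, m))) := by
      rw [Finset.disjoint_left]
      rintro ⟨a, b⟩ hp hq
      simp only [Finset.mem_image, Finset.mem_filter, Finset.mem_range,
        Prod.mk.injEq] at hq
      rw [mem_Tset] at hp
      obtain ⟨i, _, rfl, rfl⟩ := hq
      omega
    have hinj : Set.InjOn (fun i => ((i, m) : ℕ × ℕ))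
        ((range (m+1)).filter fun i => (i + m) % 2 = 0) := by
      intro a _ b _ hab
      simpa using hab
    have hc : (Tset (m+1)).card = (Tset m).card + (m/2 + 1) := by
      rw [Tset_succ, Finset.card_union_of_disjoint hdisj,
        Finset.card_image_of_injOn hinj, card_col]
    rw [hc]
    have hb : (m+1+1)^2 = (m+1)^2 + (2*m+3) := by ring
    rw [hb]
    omega

lemma card_Tset (m : ℕ) : (Tset m).card = (m+1)^2 / 4 := by
  have h := card_Tset_key m
  set a := (m+1)^2 with ha
  omega

lemma pathAdj {m : ℕ} {x y : Fin m} :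
    (pathG m).Adj x y ↔ ((x : ℕ) + 1 = y ∨ (y : ℕ) + 1 = x) := by
  rw [pathG, SimpleGraph.fromRel_adj]
  constructor
  · rintro ⟨-, h⟩; exact h
  · intro h
    refine ⟨fun he => ?_, h⟩
    subst he; omega

lemma pairAdj {m : ℕ} {s t : Sym2 (Fin m)} :
    (pairGraph (pathG m)).Adj s t ↔ s ≠ t ∧
      ∃ a x y : Fin m, ((x : ℕ) + 1 = y ∨ (y : ℕ) + 1 = x) ∧ s = s(a, x) ∧ t = s(a, y) := by
  rw [pairGraph, SimpleGraph.fromRel_adj]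
  simp only [pathAdj]
  constructor
  · rintro ⟨hne, (⟨a, x, y, hxy, hs, ht⟩ | ⟨a, x, y, hxy, ht, hs⟩)⟩
    · exact ⟨hne, a, x, y, hxy, hs, ht⟩
    · exact ⟨hne, a, y, x, Or.symm hxy, hs, ht⟩
  · rintro ⟨hne, a, x, y, hxy, hs, ht⟩
    exact ⟨hne, Or.inl ⟨a, x, y, hxy, hs, ht⟩⟩

lemma mk_inf_sup {α : Type*} [LinearOrder α] (s : Sym2 α) : s(s.inf, s.sup) = s := by
  induction s using Sym2.ind with
  | _ a b =>
    rcases le_total a b with h | h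
    · simp [Sym2.inf_mk, Sym2.sup_mk, inf_eq_left.2 h, sup_eq_right.2 h]
    · rw [Sym2.inf_mk, Sym2.sup_mk, inf_eq_right.2 h, sup_eq_left.2 h, Sym2.eq_swap]

lemma wt_mk {m : ℕ} (a x : Fin m) :
    ((s(a, x) : Sym2 (Fin m)).inf : ℕ) + ((s(a, x) : Sym2 (Fin m)).sup : ℕ) = a + x := by
  rcases le_total a x with h | h
  · rw [Sym2.inf_mk, Sym2.sup_mk, inf_eq_left.2 h, sup_eq_right.2 h]
  · rw [Sym2.inf_mk, Sym2.sup_mk, inf_eq_right.2 h, sup_eq_left.2 h, Nat.add_comm]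

lemma not_adj_of_even {m : ℕ} {s t : Sym2 (Fin m)}
    (hs : ((s.inf : ℕ) + s.sup) % 2 = 0) (ht : ((t.inf : ℕ) + t.sup) % 2 = 0) :
    ¬ (pairGraph (pathG m)).Adj s t := by
  rw [pairAdj]
  rintro ⟨-, a, x, y, hxy, rfl, rfl⟩
  rw [wt_mk] at hs ht
  omega

lemma indep_card_le {m : ℕ} (S : Finset (Sym2 (Fin m)))
    (hS : ∀ a ∈ S, ∀ b ∈ S, ¬ (pairGraph (pathG m)).Adj a b) :
    S.card ≤ (Tset m).card := by
  classical
  set F : Sym2 (Fin m) → ℕ × ℕ := fun s =>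
    if ((s.inf : ℕ) + (s.sup : ℕ)) % 2 = 0 then ((s.inf : ℕ), (s.sup : ℕ))
    else ((s.inf : ℕ), (s.sup : ℕ) - 1) with hF
  apply Finset.card_le_card_of_injOn F
  · intro s _
    have hle : (s.inf : ℕ) ≤ (s.sup : ℕ) := Fin.le_def.mp (Sym2.inf_le_sup s)
    have h1 : (s.inf : ℕ) < m := (s.inf).isLt
    have h2 : (s.sup : ℕ) < m := (s.sup).isLt
    rw [Finset.mem_coe, mem_Tset, hF]
    dsimp only
    split_ifs with h
    · exact ⟨h1, h2, hle, h⟩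
    · exact ⟨h1, by omega, by omega, by omega⟩
  · intro s hs t ht heq
    by_contra hne
    have hles : (s.inf : ℕ) ≤ (s.sup : ℕ) := Fin.le_def.mp (Sym2.inf_le_sup s)
    have hlet : (t.inf : ℕ) ≤ (t.sup : ℕ) := Fin.le_def.mp (Sym2.inf_le_sup t)
    have key : ∀ u v : Sym2 (Fin m), u ∈ S → v ∈ S → u ≠ v →
        (u.inf : ℕ) = (v.inf : ℕ) → (u.sup : ℕ) + 1 = (v.sup : ℕ) → False := by
      intro u v hu hv huv hiv hsv
      apply hS u hu v hv
      rw [pairAdj]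
      refine ⟨huv, u.inf, u.sup, v.sup, Or.inl hsv, (mk_inf_sup u).symm, ?_⟩
      rw [show u.inf = v.inf from Fin.ext hiv]
      exact (mk_inf_sup v).symm
    have hst : s = t → False := fun h => hne h
    rw [hF] at heq
    dsimp only at heq
    split_ifs at heq with h1 h2 h2 <;>
      rw [Prod.mk.injEq] at heq <;>
      obtain ⟨ha, hb⟩ := heq
    · -- both even: equal
      exact hst (by rw [← mk_inf_sup s, ← mk_inf_sup t, Fin.ext ha, Fin.ext hb])
    · -- s even, t odd: t.sup = s.sup + 1
      have hlt : (t.inf : ℕ) < (t.sup : ℕ) := by omega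
      exact key s t hs ht hne ha (by omega)
    · -- s odd, t even
      have hlt : (s.inf : ℕ) < (s.sup : ℕ) := by omega
      exact key t s ht hs (Ne.symm hne) ha.symm (by omega)
    · -- both odd
      have hlt1 : (s.inf : ℕ) < (s.sup : ℕ) := by omega
      have hlt2 : (t.inf : ℕ) < (t.sup : ℕ) := by omega
      exact hst (by rw [← mk_inf_sup s, ← mk_inf_sup t, Fin.ext ha,
        Fin.ext (show ((s.sup : ℕ) : ℕ) = (t.sup : ℕ) by omega)])

lemma exists_indep {m : ℕ} : ∃ S : Finset (Sym2 (Fin m)), S.card = (Tset m).card ∧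
    ∀ a ∈ S, ∀ b ∈ S, ¬ (pairGraph (pathG m)).Adj a b := by
  classical
  refine ⟨(Tset m).attach.image (fun p =>
    s(⟨p.1.1, (mem_Tset.mp p.2).1⟩, ⟨p.1.2, (mem_Tset.mp p.2).2.1⟩)), ?_, ?_⟩
  · rw [Finset.card_image_of_injOn, Finset.card_attach]
    rintro ⟨⟨a, b⟩, hp⟩ - ⟨⟨c, d⟩, hq⟩ - h
    have hp' := mem_Tset.mp hp
    have hq' := mem_Tset.mp hq
    simp only at hp' hq'
    rw [Sym2.eq_iff] at h
    apply Subtype.ext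
    rcases h with ⟨h1, h2⟩ | ⟨h1, h2⟩ <;>
      · have e1 := congrArg Fin.val h1
        have e2 := congrArg Fin.val h2
        simp only at e1 e2
        simp only [Prod.mk.injEq]
        omega
  · intro a ha b hb
    simp only [Finset.mem_image, Finset.mem_attach, true_and] at ha hb
    obtain ⟨p, rfl⟩ := ha
    obtain ⟨q, rfl⟩ := hb
    apply not_adj_of_even <;> rw [wt_mk]
    · exact (mem_Tset.mp p.2).2.2.2
    · exact (mem_Tset.mp q.2).2.2.2


/-- For every integer `m ≥ 3`, the independence number of the pair graph of the path
`P_m` equals `⌊(m+1)²/4⌋`. -/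
theorem indepNum_pairGraph_path (m : ℕ) (hm : 3 ≤ m) :
    indepNum (pairGraph (pathG m)) = (m + 1) ^ 2 / 4 := by
  classical
  have hub : ∀ n ∈ {n | ∃ s : Finset (Sym2 (Fin m)), s.card = n ∧
      ∀ a ∈ s, ∀ b ∈ s, ¬ (pairGraph (pathG m)).Adj a b}, n ≤ (m + 1) ^ 2 / 4 := by
    rintro n ⟨S, rfl, hS⟩
    rw [← card_Tset]
    exact indep_card_le S hS
  obtain ⟨S₀, hc, hi⟩ := exists_indep (m := m)
  rw [indepNum]
  apply le_antisymm
  · exact csSup_le ⟨0, ∅, by simp, by simp⟩ hub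
  · exact le_csSup ⟨(m + 1) ^ 2 / 4, hub⟩ ⟨S₀, by rw [hc, card_Tset], hi⟩
end

section
/- For the cycle C_m with m ≥ 3: if m = 2k+1 then the independence number of the pair graph C(C_m) equals k(k+1) + ⌊(k+1)/2⌋, and if m = 2k then it equals k(k+1). -/
section
open Finset
open Fin.NatCast
namespace PairCycleAux

variable {m : ℕ}

/-- linear distance between values -/
def ld (x y : Fin m) : ℕ := if x.val ≤ y.val then y.val - x.val else x.val - y.val

lemma ld_comm (x y : Fin m) : ld x y = ld y x := by unfold ld; split_ifs <;> omega

/-- circular distance of a 2-multiset -/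
def dd (m : ℕ) : Sym2 (Fin m) → ℕ :=
  Sym2.lift ⟨fun x y => min (ld x y) (m - ld x y), by intro a b; dsimp only; rw [ld_comm]⟩

/-- base point of a 2-multiset -/
def bs (m : ℕ) : Sym2 (Fin m) → Fin m :=
  Sym2.lift ⟨fun x y =>
    if x.val ≤ y.val then (if 2*(y.val-x.val) ≤ m then x else y)
    else (if 2*(x.val-y.val) ≤ m then y else x), by
      intro a b
      dsimp only
      split_ifs <;> first | rfl | (exact Fin.ext (by omega))⟩

lemma dd_mk' (x y : Fin m) :
    dd m (s(x, y)) = min (ld x y) (m - ld x y) := rfl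

lemma bs_mk' (x y : Fin m) :
    bs m (s(x, y)) = if x.val ≤ y.val then (if 2*(y.val-x.val) ≤ m then x else y)
    else (if 2*(x.val-y.val) ≤ m then y else x) := rfl

lemma addval [NeZero m] (i : Fin m) {δ : ℕ} (hδ : δ ≤ m) :
    (i + (δ : Fin m)).val = if i.val + δ < m then i.val + δ else i.val + δ - m := by
  rw [Fin.val_add, Fin.val_natCast, Nat.add_mod_mod]
  have him := i.isLt
  split_ifs with h
  · exact Nat.mod_eq_of_lt h
  · rw [Nat.mod_eq_sub_mod (by omega), Nat.mod_eq_of_lt (by omega)]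

lemma dd_bs_mk [NeZero m] (i : Fin m) {δ : ℕ} (h : 2*δ < m ∨ (2*δ = m ∧ i.val < δ)) :
    dd m (s(i, i + (δ : Fin m))) = δ ∧ bs m (s(i, i + (δ : Fin m))) = i := by
  have hδm : δ ≤ m := by omega
  have hv := addval i hδm
  have hiv := i.isLt
  rcases Nat.lt_or_ge (i.val + δ) m with hc | hc
  · rw [if_pos hc] at hv
    constructor
    · rw [dd_mk']; unfold ld; rw [Nat.min_def]; split_ifs <;> omega
    · rw [bs_mk']; split_ifs <;> first | rfl | (exfalso; omega)
  · rw [if_neg (by omega)] at hv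
    constructor
    · rw [dd_mk']; unfold ld; rw [Nat.min_def]; split_ifs <;> omega
    · rw [bs_mk']; split_ifs <;> first | rfl | (exfalso; omega)

lemma dd_mk [NeZero m] (i : Fin m) {δ : ℕ} (h : 2*δ < m ∨ (2*δ = m ∧ i.val < δ)) :
    dd m (s(i, i + (δ : Fin m))) = δ := (dd_bs_mk i h).1

lemma bs_mk [NeZero m] (i : Fin m) {δ : ℕ} (h : 2*δ < m ∨ (2*δ = m ∧ i.val < δ)) :
    bs m (s(i, i + (δ : Fin m))) = i := (dd_bs_mk i h).2

lemma two_dd_le [NeZero m] (v : Sym2 (Fin m)) : 2 * dd m v ≤ m := by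
  induction v using Sym2.ind with
  | _ x y =>
    have hx := x.isLt; have hy := y.isLt
    rw [dd_mk']; unfold ld; rw [Nat.min_def]; split_ifs <;> omega

lemma recon [NeZero m] (v : Sym2 (Fin m)) :
    v = s(bs m v, bs m v + ((dd m v : ℕ) : Fin m)) := by
  induction v using Sym2.ind with
  | _ x y =>
    have hx := x.isLt; have hy := y.isLt
    have hld : ld x y ≤ m := by unfold ld; split_ifs <;> omega
    rcases le_or_gt x.val y.val with hxy | hxy
    · rcases le_or_gt (2*(y.val - x.val)) m with h2 | h2
      · have hbs : bs m (s(x,y)) = x := by rw [bs_mk', if_pos hxy, if_pos h2]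
        have hdd : dd m (s(x,y)) = y.val - x.val := by
          rw [dd_mk']; unfold ld; rw [Nat.min_def]; split_ifs <;> omega
        rw [hbs, hdd]
        have : x + ((y.val - x.val : ℕ) : Fin m) = y := by
          apply Fin.ext; rw [addval x (by omega)]; split_ifs <;> omega
        rw [this]
      · have hbs : bs m (s(x,y)) = y := by rw [bs_mk', if_pos hxy, if_neg (by omega)]
        have hdd : dd m (s(x,y)) = m - (y.val - x.val) := by
          rw [dd_mk']; unfold ld; rw [Nat.min_def]; split_ifs <;> omega
        rw [hbs, hdd]
        have : y + ((m - (y.val - x.val) : ℕ) : Fin m) = x := by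
          apply Fin.ext; rw [addval y (by omega)]; split_ifs <;> omega
        rw [this, Sym2.eq_swap]
    · rcases le_or_gt (2*(x.val - y.val)) m with h2 | h2
      · have hbs : bs m (s(x,y)) = y := by rw [bs_mk', if_neg (by omega), if_pos h2]
        have hdd : dd m (s(x,y)) = x.val - y.val := by
          rw [dd_mk']; unfold ld; rw [Nat.min_def]; split_ifs <;> omega
        rw [hbs, hdd]
        have : y + ((x.val - y.val : ℕ) : Fin m) = x := by
          apply Fin.ext; rw [addval y (by omega)]; split_ifs <;> omega
        rw [this, Sym2.eq_swap]
      · have hbs : bs m (s(x,y)) = x := by rw [bs_mk', if_neg (by omega), if_neg (by omega)]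
        have hdd : dd m (s(x,y)) = m - (x.val - y.val) := by
          rw [dd_mk']; unfold ld; rw [Nat.min_def]; split_ifs <;> omega
        rw [hbs, hdd]
        have : x + ((m - (x.val - y.val) : ℕ) : Fin m) = y := by
          apply Fin.ext; rw [addval x (by omega)]; split_ifs <;> omega
        rw [this]



variable {m : ℕ}

lemma val_add_one [NeZero m] (x : Fin m) :
    (x + 1).val = if x.val + 1 < m then x.val + 1 else x.val + 1 - m := by
  rw [show (1 : Fin m) = ((1 : ℕ) : Fin m) by simp]
  exact addval x (by have := x.isLt; omega)

lemma adjC [NeZero m] (hm : 3 ≤ m) (x : Fin m) : (cycleG m).Adj x (x + 1) := by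
  haveI : NeZero m := ⟨by omega⟩
  have hx := x.isLt
  have key := val_add_one x
  rw [cycleG, SimpleGraph.fromRel_adj]
  constructor
  · intro h
    have := congrArg Fin.val h
    split_ifs at key <;> omega
  · by_cases hlt : x.val + 1 < m
    · rw [if_pos hlt] at key
      exact Or.inl (Or.inl (by omega))
    · rw [if_neg hlt] at key
      exact Or.inr (Or.inr ⟨by omega, by omega⟩)

lemma adjC' [NeZero m] (hm : 3 ≤ m) {x y : Fin m} (h : (cycleG m).Adj x y) : y = x + 1 ∨ x = y + 1 := by
  haveI : NeZero m := ⟨by omega⟩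
  have hx := x.isLt; have hy := y.isLt
  have keyx := val_add_one x; have keyy := val_add_one y
  rw [cycleG, SimpleGraph.fromRel_adj] at h
  obtain ⟨hne, h⟩ := h
  have hnev : x.val ≠ y.val := fun hc => hne (Fin.ext hc)
  rcases h with (h | h) | (h | h)
  · left; apply Fin.ext; split_ifs at keyx <;> omega
  · right; apply Fin.ext; split_ifs at keyy <;> omega
  · right; apply Fin.ext; split_ifs at keyy <;> omega
  · left; apply Fin.ext; split_ifs at keyx <;> omega

lemma adjP [NeZero m] (hm : 3 ≤ m) (a x : Fin m) :
    (pairGraph (cycleG m)).Adj (s(a, x)) (s(a, x + 1)) := by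
  have hC := adjC hm x
  rw [pairGraph, SimpleGraph.fromRel_adj]
  refine ⟨?_, Or.inl ⟨a, x, x + 1, hC, rfl, rfl⟩⟩
  intro h
  rw [Sym2.eq_iff] at h
  rcases h with ⟨-, h⟩ | ⟨h1, h2⟩
  · exact hC.ne h
  · exact hC.ne (h2.trans h1)

lemma adj_dest [NeZero m] (hm : 3 ≤ m) {s t : Sym2 (Fin m)} (h : (pairGraph (cycleG m)).Adj s t) :
    ∃ a x : Fin m, (s = s(a, x) ∧ t = s(a, x + 1)) ∨
      (t = s(a, x) ∧ s = s(a, x + 1)) := by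
  rw [pairGraph, SimpleGraph.fromRel_adj] at h
  obtain ⟨-, h⟩ := h
  rcases h with ⟨a, x, y, hxy, hs, ht⟩ | ⟨a, x, y, hxy, ht, hs⟩
  · rcases adjC' hm hxy with h1 | h1
    · exact ⟨a, x, Or.inl ⟨hs, by rw [ht, h1]⟩⟩
    · exact ⟨a, y, Or.inr ⟨ht, by rw [hs, h1]⟩⟩
  · rcases adjC' hm hxy with h1 | h1
    · exact ⟨a, x, Or.inr ⟨ht, by rw [hs, h1]⟩⟩
    · exact ⟨a, y, Or.inl ⟨hs, by rw [ht, h1]⟩⟩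

lemma dd_step [NeZero m] (hm : 3 ≤ m) (a x : Fin m) :
    dd m (s(a, x + 1)) = dd m (s(a, x)) + 1 ∨
    dd m (s(a, x)) = dd m (s(a, x + 1)) + 1 ∨
    (dd m (s(a, x)) = dd m (s(a, x + 1)) ∧
      m = 2 * dd m (s(a, x)) + 1) := by
  haveI : NeZero m := ⟨by omega⟩
  have ha := a.isLt; have hx := x.isLt
  have key := val_add_one x
  rw [dd_mk', dd_mk']
  unfold ld
  rw [Nat.min_def, Nat.min_def]
  split_ifs at key ⊢ <;> omega

lemma dd_adj [NeZero m] (hm : 3 ≤ m) {v w : Sym2 (Fin m)} (h : (pairGraph (cycleG m)).Adj v w) :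
    dd m w = dd m v + 1 ∨ dd m v = dd m w + 1 ∨
      (dd m v = dd m w ∧ m = 2 * dd m v + 1) := by
  obtain ⟨a, x, hc⟩ := adj_dest hm h
  rcases hc with ⟨h1, h2⟩ | ⟨h1, h2⟩ <;> rw [h1, h2] <;>
    rcases dd_step hm a x with h | h | h <;> omega


variable {k : ℕ}

lemma notadj [NeZero m] (hm3 : 3 ≤ m) {S : Finset (Sym2 (Fin m))}
    (hS : ∀ a ∈ S, ∀ b ∈ S, ¬ (pairGraph (cycleG m)).Adj a b)
    {v w : Sym2 (Fin m)} (hv : v ∈ S) (hw : w ∈ S)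
    (hb : bs m v = bs m w) (hd : dd m w = dd m v + 1) : False := by
  have h1 := recon v
  have h2 := recon w
  rw [← hb, hd] at h2
  have hc : ((dd m v + 1 : ℕ) : Fin m) = ((dd m v : ℕ) : Fin m) + 1 := by push_cast; ring
  rw [hc, ← add_assoc] at h2
  apply hS v hv w hw
  rw [h1, h2]
  exact adjP hm3 (bs m v) (bs m v + ((dd m v : ℕ) : Fin m))

lemma block_le [NeZero m] (hm3 : 3 ≤ m) {S : Finset (Sym2 (Fin m))}
    (hS : ∀ a ∈ S, ∀ b ∈ S, ¬ (pairGraph (cycleG m)).Adj a b) (b : ℕ) :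
    (S.filter (fun v => dd m v / 2 = b)).card ≤ m := by
  have h := Finset.card_le_card_of_injOn (s := S.filter (fun v => dd m v / 2 = b))
    (t := (Finset.univ : Finset (Fin m))) (fun v => bs m v)
    (fun v _ => Finset.mem_univ _) ?_
  · simpa using h
  · intro v hv w hw hbs
    have hbs' : bs m v = bs m w := hbs
    simp only [Finset.coe_filter, Set.mem_setOf_eq] at hv hw
    rcases Nat.lt_trichotomy (dd m v) (dd m w) with hlt | heq | hlt
    · exact (notadj hm3 hS hv.1 hw.1 hbs' (by omega)).elim
    · rw [recon v, recon w, hbs', heq]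
    · exact (notadj hm3 hS hw.1 hv.1 hbs'.symm (by omega)).elim

lemma card_row [NeZero m] (hδ2 : 2 * k < m) :
    ((Finset.univ : Finset (Sym2 (Fin m))).filter (fun v => dd m v = k)).card = m := by
  have himg : (Finset.univ : Finset (Sym2 (Fin m))).filter (fun v => dd m v = k)
      = Finset.image (fun i : Fin m => s(i, i + ((k : ℕ) : Fin m))) Finset.univ := by
    ext v
    simp only [Finset.mem_filter, Finset.mem_univ, true_and, Finset.mem_image]
    constructor
    · intro hd
      refine ⟨bs m v, ?_⟩
      rw [← hd]
      exact (recon v).symm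
    · rintro ⟨i, rfl⟩
      exact dd_mk i (Or.inl hδ2)
  rw [himg, Finset.card_image_of_injOn, Finset.card_univ, Fintype.card_fin]
  intro i _ j _ hij
  have hij' : s(i, i + ((k : ℕ) : Fin m)) = s(j, j + ((k : ℕ) : Fin m)) := hij
  have h1 := bs_mk i (Or.inl hδ2)
  have h2 := bs_mk j (Or.inl hδ2)
  rw [← h1, ← h2, hij']

lemma bs_lt_even (hm : m = 2*k) (hk1 : 1 ≤ k) (v : Sym2 (Fin m)) (hd : dd m v = k) :
    (bs m v).val < k := by
  induction v using Sym2.ind with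
  | _ x y =>
    have hx := x.isLt; have hy := y.isLt
    rw [dd_mk'] at hd; unfold ld at hd; rw [Nat.min_def] at hd
    rw [bs_mk']
    split_ifs at hd ⊢ <;> omega

lemma topblock_even (hm : m = 2*k) (hm3 : 3 ≤ m) (hke : k % 2 = 0)
    {S : Finset (Sym2 (Fin m))}
    (hS : ∀ a ∈ S, ∀ b ∈ S, ¬ (pairGraph (cycleG m)).Adj a b) :
    (S.filter (fun v => dd m v / 2 = k / 2)).card ≤ k := by
  haveI : NeZero m := ⟨by omega⟩
  have h := Finset.card_le_card_of_injOn (s := S.filter (fun v => dd m v / 2 = k / 2))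
    (t := Finset.range k) (fun v => (bs m v).val) ?_ ?_
  · simpa using h
  · intro v hv
    simp only [Finset.mem_coe, Finset.mem_filter] at hv
    have hdle := two_dd_le v
    have hd : dd m v = k := by omega
    exact Finset.mem_range.mpr (bs_lt_even hm (by omega) v hd)
  · intro v hv w hw hbs
    have hbs' : (bs m v).val = (bs m w).val := hbs
    simp only [Finset.coe_filter, Set.mem_setOf_eq] at hv hw
    have hdv : dd m v = k := by have := two_dd_le v; omega
    have hdw : dd m w = k := by have := two_dd_le w; omega
    rw [recon v, recon w, Fin.ext hbs', hdv, hdw]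

lemma topblock_odd (hm : m = 2*k+1) (hm3 : 3 ≤ m) (hke : k % 2 = 0)
    {S : Finset (Sym2 (Fin m))}
    (hS : ∀ a ∈ S, ∀ b ∈ S, ¬ (pairGraph (cycleG m)).Adj a b) :
    (S.filter (fun v => dd m v / 2 = k / 2)).card ≤ k := by
  haveI : NeZero m := ⟨by omega⟩
  have h2k : 2 * k < m := by omega
  set T := S.filter (fun v => dd m v / 2 = k / 2) with hT
  have hdT : ∀ v ∈ T, dd m v = k := by
    intro v hv
    rw [hT, Finset.mem_filter] at hv
    have := two_dd_le v
    omega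
  have hTS : ∀ v ∈ T, v ∈ S := fun v hv => (Finset.mem_filter.mp hv).1
  let φ : Sym2 (Fin m) → Sym2 (Fin m) :=
    fun v => s(bs m v + ((k+1 : ℕ) : Fin m), bs m v)
  have hφv : ∀ v, φ v = s(bs m v + ((k+1 : ℕ) : Fin m), bs m v) := fun _ => rfl
  have hsum : ∀ i : Fin m, (i + ((k+1 : ℕ) : Fin m)) + ((k : ℕ) : Fin m) = i := by
    intro i
    rw [add_assoc, ← Nat.cast_add, show k+1+k = m by omega, Fin.natCast_self, add_zero]
  have hφform : ∀ v, φ v = s(bs m v + ((k+1 : ℕ) : Fin m),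
      (bs m v + ((k+1 : ℕ) : Fin m)) + ((k : ℕ) : Fin m)) := by
    intro v; rw [hφv v]; congr 2; exact (hsum (bs m v)).symm
  have hφdd : ∀ v, dd m (φ v) = k := by
    intro v; rw [hφform v]; exact dd_mk _ (Or.inl h2k)
  have hφbs : ∀ v, bs m (φ v) = bs m v + ((k+1 : ℕ) : Fin m) := by
    intro v; rw [hφform v]; exact bs_mk _ (Or.inl h2k)
  have hadj : ∀ v ∈ T, (pairGraph (cycleG m)).Adj v (φ v) := by
    intro v hv
    have hrv : v = s(bs m v, bs m v + ((k : ℕ) : Fin m)) := by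
      have := recon v; rwa [hdT v hv] at this
    have hw : φ v = s(bs m v, (bs m v + ((k : ℕ) : Fin m)) + 1) := by
      rw [hφv v, Sym2.eq_swap]
      congr 1
      rw [add_assoc]
      congr 1
      push_cast
      ring
    have := adjP hm3 (bs m v) (bs m v + ((k : ℕ) : Fin m))
    rw [← hrv, ← hw] at this
    exact this
  have hφnotS : ∀ v ∈ T, φ v ∉ S := by
    intro v hv hc
    exact hS v (hTS v hv) (φ v) hc (hadj v hv)
  have hinj : Set.InjOn φ T := by
    intro v hv w hw he
    have h1 : bs m (φ v) = bs m (φ w) := by rw [he]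
    rw [hφbs, hφbs] at h1
    have h2 : bs m v = bs m w := add_right_cancel h1
    rw [recon v, recon w, h2, hdT v hv, hdT w hw]
  have hsub : T ∪ T.image φ ⊆ Finset.univ.filter (fun v => dd m v = k) := by
    intro v hv
    rcases Finset.mem_union.mp hv with h | h
    · exact Finset.mem_filter.mpr ⟨Finset.mem_univ _, hdT v h⟩
    · obtain ⟨w, hw, rfl⟩ := Finset.mem_image.mp h
      exact Finset.mem_filter.mpr ⟨Finset.mem_univ _, hφdd w⟩
  have hdisj : Disjoint T (T.image φ) := by
    rw [Finset.disjoint_left]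
    intro v hv hc
    obtain ⟨w, hw, he⟩ := Finset.mem_image.mp hc
    exact hφnotS w hw (he.symm ▸ hTS v hv)
  have hcard := Finset.card_le_card hsub
  rw [Finset.card_union_of_disjoint hdisj, Finset.card_image_of_injOn hinj,
    card_row h2k] at hcard
  omega

lemma decomp [NeZero m] (hm3 : 3 ≤ m) {K : ℕ} (hK : 2 * K + 1 ≥ m)
    (S : Finset (Sym2 (Fin m))) :
    S.card = ∑ b ∈ Finset.range (K/2+1), (S.filter (fun v => dd m v / 2 = b)).card := by
  rw [← Finset.card_biUnion]
  · congr 1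
    ext v
    simp only [Finset.mem_biUnion, Finset.mem_range, Finset.mem_filter]
    constructor
    · intro hv
      exact ⟨dd m v / 2, by have := two_dd_le v; omega, hv, rfl⟩
    · rintro ⟨b, -, hv, -⟩
      exact hv
  · intro b _ c _ hbc
    simp only [Finset.disjoint_left, Finset.mem_filter]
    rintro v ⟨-, h1⟩ ⟨-, h2⟩
    exact hbc (h1.symm.trans h2)

lemma ub_odd (hm : m = 2*k+1) (hm3 : 3 ≤ m) {S : Finset (Sym2 (Fin m))}
    (hS : ∀ a ∈ S, ∀ b ∈ S, ¬ (pairGraph (cycleG m)).Adj a b) :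
    S.card ≤ k*(k+1) + (k+1)/2 := by
  haveI : NeZero m := ⟨by omega⟩
  have hdec := decomp hm3 (K := k) (by omega) S
  rcases Nat.even_or_odd k with hke | hko
  · obtain ⟨j, hj'⟩ := hke
    have hj : k = 2*j := by omega
    rw [Finset.sum_range_succ] at hdec
    have hlast := topblock_odd hm hm3 (by omega) hS
    have hrest : ∑ b ∈ Finset.range (k/2), (S.filter (fun v => dd m v / 2 = b)).card
        ≤ (k/2) * m := by
      calc ∑ b ∈ Finset.range (k/2), (S.filter (fun v => dd m v / 2 = b)).card
          ≤ ∑ _b ∈ Finset.range (k/2), m := Finset.sum_le_sum (fun b _ => block_le hm3 hS b)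
        _ = (k/2) * m := by rw [Finset.sum_const, Finset.card_range, smul_eq_mul]
    have harith : (k/2) * m + k = k*(k+1) + (k+1)/2 := by
      have h1 : k/2 = j := by omega
      have h2 : (k+1)/2 = j := by omega
      rw [h1, h2, hm, hj]
      ring
    rw [hdec]
    calc ∑ b ∈ Finset.range (k/2), (S.filter (fun v => dd m v / 2 = b)).card
          + (S.filter (fun v => dd m v / 2 = k/2)).card
        ≤ (k/2) * m + k := Nat.add_le_add hrest hlast
      _ = k*(k+1) + (k+1)/2 := harith
  · have hblocks : S.card ≤ (k/2+1) * m := by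
      rw [hdec]
      calc ∑ b ∈ Finset.range (k/2+1), (S.filter (fun v => dd m v / 2 = b)).card
          ≤ ∑ _b ∈ Finset.range (k/2+1), m := Finset.sum_le_sum (fun b _ => block_le hm3 hS b)
        _ = (k/2+1) * m := by rw [Finset.sum_const, Finset.card_range, smul_eq_mul]
    obtain ⟨j, hj⟩ := hko
    have harith : (k/2+1) * m = k*(k+1) + (k+1)/2 := by
      have h1 : k/2 = j := by omega
      have h2 : (k+1)/2 = j+1 := by omega
      rw [h1, h2, hm, hj]
      ring
    exact hblocks.trans (le_of_eq harith)

lemma ub_even (hm : m = 2*k) (hm3 : 3 ≤ m) {S : Finset (Sym2 (Fin m))}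
    (hS : ∀ a ∈ S, ∀ b ∈ S, ¬ (pairGraph (cycleG m)).Adj a b) :
    S.card ≤ k*(k+1) := by
  haveI : NeZero m := ⟨by omega⟩
  have hdec := decomp hm3 (K := k) (by omega) S
  rcases Nat.even_or_odd k with hke | hko
  · obtain ⟨j, hj'⟩ := hke
    have hj : k = 2*j := by omega
    rw [Finset.sum_range_succ] at hdec
    have hlast := topblock_even hm hm3 (by omega) hS
    have hrest : ∑ b ∈ Finset.range (k/2), (S.filter (fun v => dd m v / 2 = b)).card
        ≤ (k/2) * m := by
      calc ∑ b ∈ Finset.range (k/2), (S.filter (fun v => dd m v / 2 = b)).card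
          ≤ ∑ _b ∈ Finset.range (k/2), m := Finset.sum_le_sum (fun b _ => block_le hm3 hS b)
        _ = (k/2) * m := by rw [Finset.sum_const, Finset.card_range, smul_eq_mul]
    have harith : (k/2) * m + k = k*(k+1) := by
      have h1 : k/2 = j := by omega
      rw [h1, hm, hj]
      ring
    rw [hdec]
    calc ∑ b ∈ Finset.range (k/2), (S.filter (fun v => dd m v / 2 = b)).card
          + (S.filter (fun v => dd m v / 2 = k/2)).card
        ≤ (k/2) * m + k := Nat.add_le_add hrest hlast
      _ = k*(k+1) := harith
  · have hblocks : S.card ≤ (k/2+1) * m := by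
      rw [hdec]
      calc ∑ b ∈ Finset.range (k/2+1), (S.filter (fun v => dd m v / 2 = b)).card
          ≤ ∑ _b ∈ Finset.range (k/2+1), m := Finset.sum_le_sum (fun b _ => block_le hm3 hS b)
        _ = (k/2+1) * m := by rw [Finset.sum_const, Finset.card_range, smul_eq_mul]
    obtain ⟨j, hj⟩ := hko
    have harith : (k/2+1) * m = k*(k+1) := by
      have h1 : k/2 = j := by omega
      rw [h1, hm, hj]
      ring
    exact hblocks.trans (le_of_eq harith)


lemma rowk_adj [NeZero m] (hm : m = 2*k+1) (hm3 : 3 ≤ m) {v w : Sym2 (Fin m)}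
    (hadj : (pairGraph (cycleG m)).Adj v w) (hv : dd m v = k) (hw : dd m w = k) :
    bs m w = bs m v + ((k+1 : ℕ) : Fin m) ∨ bs m v = bs m w + ((k+1 : ℕ) : Fin m) := by
  obtain ⟨k', rfl⟩ : ∃ k', k = k'+1 := ⟨k-1, by omega⟩
  have h2k : 2*(k'+1) < m := by omega
  have main : ∀ (p q : Sym2 (Fin m)), dd m p = k'+1 → dd m q = k'+1 →
      (∃ a x : Fin m, p = s(a,x) ∧ q = s(a, x+1)) →
      bs m q = bs m p + ((k'+1+1:ℕ) : Fin m) := by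
    rintro p q hp hq ⟨a, x, rfl, rfl⟩
    obtain ⟨b, hb⟩ : ∃ b, bs m (s(a,x)) = b := ⟨_, rfl⟩
    have hrp := recon (s(a, x))
    rw [hp, hb] at hrp
    rw [hb]
    rcases Sym2.eq_iff.mp hrp with ⟨ha, hx⟩ | ⟨ha, hx⟩
    · rw [hx, ha]
      have h1 : (b + ((k'+1:ℕ):Fin m)) + 1 = b + ((k'+1+1:ℕ):Fin m) := by push_cast; abel
      have hj : (b + ((k'+1+1:ℕ):Fin m)) + ((k'+1:ℕ):Fin m) = b := by
        rw [add_assoc, ← Nat.cast_add, show k'+1+1+(k'+1) = m by omega,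
          Fin.natCast_self, add_zero]
      have he : s(b, (b + ((k'+1:ℕ):Fin m)) + 1)
          = s(b + ((k'+1+1:ℕ):Fin m), (b + ((k'+1+1:ℕ):Fin m)) + ((k'+1:ℕ):Fin m)) := by
        rw [h1, hj]
        exact Sym2.eq_swap
      rw [he]
      exact bs_mk _ (Or.inl h2k)
    · exfalso
      rw [ha, hx] at hq
      have he : s(b + ((k'+1:ℕ):Fin m), b + 1)
          = s(b + 1, (b + 1) + ((k':ℕ):Fin m)) := by
        rw [Sym2.eq_swap]
        congr 1
        push_cast
        abel
      rw [he, dd_mk _ (Or.inl (by omega))] at hq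
      omega
  obtain ⟨a, x, hc⟩ := adj_dest hm3 hadj
  rcases hc with ⟨h1, h2⟩ | ⟨h1, h2⟩
  · exact Or.inl (main v w hv hw ⟨a, x, h1, h2⟩)
  · exact Or.inr (main w v hw hv ⟨a, x, h1, h2⟩)

lemma Ecard (n : ℕ) : ((Finset.range n).filter (fun x => x % 2 = 0)).card = (n+1)/2 := by
  induction n with
  | zero => simp
  | succ n ih =>
    rw [Finset.range_add_one, Finset.filter_insert]
    by_cases h : n % 2 = 0
    · rw [if_pos h, Finset.card_insert_of_notMem (by simp), ih]
      omega
    · rw [if_neg h, ih]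
      omega

lemma card_val_lt [NeZero m] (hkm : k ≤ m) :
    ((Finset.univ : Finset (Fin m)).filter (fun i => i.val < k)).card = k := by
  apply Finset.card_eq_of_bijective (fun t ht => (⟨t, lt_of_lt_of_le ht hkm⟩ : Fin m))
  · intro a ha
    rw [Finset.mem_filter] at ha
    exact ⟨a.val, ha.2, Fin.ext rfl⟩
  · intro i hi
    exact Finset.mem_filter.mpr ⟨Finset.mem_univ _, hi⟩
  · intro i j hi hj hij
    exact Fin.mk.inj_iff.mp hij

lemma image_card_dd [NeZero m] (A : Finset (Fin m × ℕ))
    (hcond : ∀ p ∈ A, 2*p.2 < m ∨ (2*p.2 = m ∧ p.1.val < p.2)) :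
    (A.image (fun p => s(p.1, p.1 + ((p.2 : ℕ) : Fin m)))).card = A.card ∧
    ∀ v ∈ A.image (fun p => s(p.1, p.1 + ((p.2 : ℕ) : Fin m))), ∃ p ∈ A, dd m v = p.2 := by
  have hinj : Set.InjOn (fun p : Fin m × ℕ => s(p.1, p.1 + ((p.2 : ℕ) : Fin m))) A := by
    intro p hp q hq he
    have hp' := Finset.mem_coe.mp hp
    have hq' := Finset.mem_coe.mp hq
    have he' : s(p.1, p.1 + ((p.2:ℕ):Fin m)) = s(q.1, q.1 + ((q.2:ℕ):Fin m)) := he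
    have h1 := dd_mk p.1 (hcond p hp')
    have h1' := bs_mk p.1 (hcond p hp')
    have h2 := dd_mk q.1 (hcond q hq')
    have h2' := bs_mk q.1 (hcond q hq')
    have e2 : p.2 = q.2 := by rw [← h1, ← h2, he']
    have e1 : p.1 = q.1 := by rw [← h1', ← h2', he']
    exact Prod.ext e1 e2
  refine ⟨Finset.card_image_of_injOn hinj, ?_⟩
  intro v hv
  obtain ⟨p, hp, rfl⟩ := Finset.mem_image.mp hv
  exact ⟨p, hp, dd_mk p.1 (hcond p hp)⟩

lemma lb_even (hm : m = 2*k) (hm3 : 3 ≤ m) :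
    ∃ S : Finset (Sym2 (Fin m)), S.card = k*(k+1) ∧
      ∀ a ∈ S, ∀ b ∈ S, ¬ (pairGraph (cycleG m)).Adj a b := by
  haveI : NeZero m := ⟨by omega⟩
  have hindep : ∀ (S : Finset (Sym2 (Fin m))), (∀ v ∈ S, dd m v % 2 = 0) →
      ∀ a ∈ S, ∀ b ∈ S, ¬ (pairGraph (cycleG m)).Adj a b := by
    intro S hSdd a ha b hb hadj
    have h1 := hSdd a ha
    have h2 := hSdd b hb
    rcases dd_adj hm3 hadj with h | h | ⟨h, hmm'⟩ <;> omega
  rcases Nat.even_or_odd k with hke | hko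
  · obtain ⟨j, hj'⟩ := hke
    have hj : k = 2*j := by omega
    set A : Finset (Fin m × ℕ) :=
      ((Finset.univ ×ˢ ((Finset.range k).filter (fun δ => δ % 2 = 0))) ∪
        ((Finset.univ.filter (fun i : Fin m => i.val < k)) ×ˢ {k})) with hA
    have hcond : ∀ p ∈ A, 2*p.2 < m ∨ (2*p.2 = m ∧ p.1.val < p.2) := by
      intro p hp
      rcases Finset.mem_union.mp hp with h | h
      · simp only [Finset.mem_product, Finset.mem_filter, Finset.mem_range] at h
        omega
      · simp only [Finset.mem_product, Finset.mem_filter, Finset.mem_singleton] at h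
        right
        refine ⟨by omega, ?_⟩
        rw [h.2]
        exact h.1.2
    have heven : ∀ p ∈ A, p.2 % 2 = 0 := by
      intro p hp
      rcases Finset.mem_union.mp hp with h | h
      · simp only [Finset.mem_product, Finset.mem_filter, Finset.mem_range] at h
        omega
      · simp only [Finset.mem_product, Finset.mem_singleton] at h
        omega
    obtain ⟨hcard, hdd⟩ := image_card_dd A hcond
    refine ⟨A.image (fun p => s(p.1, p.1 + ((p.2 : ℕ) : Fin m))), ?_, hindep _ ?_⟩
    · rw [hcard, hA, Finset.card_union_of_disjoint, Finset.card_product,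
        Finset.card_product, Ecard, card_val_lt (by omega), Finset.card_singleton,
        Finset.card_univ, Fintype.card_fin]
      · rw [hm, hj]
        have : (2*j+1)/2 = j := by omega
        rw [this]
        ring
      · rw [Finset.disjoint_left]
        rintro ⟨i, δ⟩ h1 h2
        simp only [Finset.mem_product, Finset.mem_filter, Finset.mem_range] at h1
        simp only [Finset.mem_product, Finset.mem_singleton] at h2
        omega
    · intro v hv
      obtain ⟨p, hp, hpd⟩ := hdd v hv
      rw [hpd]
      exact heven p hp
  · obtain ⟨j, hj⟩ := hko
    set A : Finset (Fin m × ℕ) :=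
      (Finset.univ ×ˢ ((Finset.range (k+1)).filter (fun δ => δ % 2 = 0))) with hA
    have hcond : ∀ p ∈ A, 2*p.2 < m ∨ (2*p.2 = m ∧ p.1.val < p.2) := by
      intro p hp
      rw [hA] at hp
      simp only [Finset.mem_product, Finset.mem_filter, Finset.mem_range] at hp
      omega
    have heven : ∀ p ∈ A, p.2 % 2 = 0 := by
      intro p hp
      rw [hA] at hp
      simp only [Finset.mem_product, Finset.mem_filter, Finset.mem_range] at hp
      omega
    obtain ⟨hcard, hdd⟩ := image_card_dd A hcond
    refine ⟨A.image (fun p => s(p.1, p.1 + ((p.2 : ℕ) : Fin m))), ?_, hindep _ ?_⟩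
    · rw [hcard, hA, Finset.card_product, Ecard, Finset.card_univ, Fintype.card_fin]
      rw [hm, hj]
      have : (2*j+1+1+1)/2 = j+1 := by omega
      rw [this]
      ring
    · intro v hv
      obtain ⟨p, hp, hpd⟩ := hdd v hv
      rw [hpd]
      exact heven p hp

lemma lb_odd (hm : m = 2*k+1) (hm3 : 3 ≤ m) :
    ∃ S : Finset (Sym2 (Fin m)), S.card = k*(k+1) + (k+1)/2 ∧
      ∀ a ∈ S, ∀ b ∈ S, ¬ (pairGraph (cycleG m)).Adj a b := by
  haveI : NeZero m := ⟨by omega⟩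
  rcases Nat.even_or_odd k with hke | hko
  · -- k even : even rows below k, plus an independent set in the top row
    obtain ⟨j, hj'⟩ := hke
    have hj : k = 2*j := by omega
    have hk2 : 2 ≤ k := by omega
    have h2k : 2*k < m := by omega
    set A : Finset (Fin m × ℕ) :=
      (Finset.univ ×ˢ ((Finset.range k).filter (fun δ => δ % 2 = 0))) with hA
    have hcond : ∀ p ∈ A, 2*p.2 < m ∨ (2*p.2 = m ∧ p.1.val < p.2) := by
      intro p hp
      rw [hA] at hp
      simp only [Finset.mem_product, Finset.mem_filter, Finset.mem_range] at hp
      omega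
    obtain ⟨hcard1, hdd1⟩ := image_card_dd A hcond
    set S1 := A.image (fun p => s(p.1, p.1 + ((p.2 : ℕ) : Fin m))) with hS1
    have hS1dd : ∀ v ∈ S1, dd m v % 2 = 0 ∧ dd m v < k := by
      intro v hv
      obtain ⟨p, hp, hpd⟩ := hdd1 v hv
      rw [hA] at hp
      simp only [Finset.mem_product, Finset.mem_filter, Finset.mem_range] at hp
      omega
    set g : ℕ → Sym2 (Fin m) :=
      fun t => s(((t*(2*k) : ℕ) : Fin m), ((t*(2*k) : ℕ) : Fin m) + ((k : ℕ) : Fin m))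
      with hg
    set S2 := (Finset.range k).image g with hS2
    have hgdd : ∀ t, dd m (g t) = k := fun t => dd_mk _ (Or.inl h2k)
    have hgbs : ∀ t, bs m (g t) = ((t*(2*k) : ℕ) : Fin m) := fun t => bs_mk _ (Or.inl h2k)
    have hS2dd : ∀ v ∈ S2, dd m v = k := by
      intro v hv
      obtain ⟨t, _, rfl⟩ := Finset.mem_image.mp hv
      exact hgdd t
    have hco : Nat.Coprime m (2*k) := by
      rw [hm, show 2*k+1 = 1+2*k by omega]
      exact Nat.coprime_add_self_left.mpr (Nat.coprime_one_left _)
    have hcop : Nat.Coprime m k := hco.coprime_dvd_right ⟨2, by ring⟩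
    have hmodeq : ∀ a b : ℕ, ((a : Fin m) = (b : Fin m)) → a ≡ b [MOD m] := by
      intro a b hab
      have := congrArg Fin.val hab
      rwa [Fin.val_natCast, Fin.val_natCast] at this
    have hginj : Set.InjOn g (Finset.range k) := by
      intro t ht t' ht' he
      have ht := Finset.mem_coe.mp ht
      have ht' := Finset.mem_coe.mp ht'
      rw [Finset.mem_range] at ht ht'
      have hb : ((t*(2*k) : ℕ) : Fin m) = ((t'*(2*k) : ℕ) : Fin m) := by
        rw [← hgbs t, ← hgbs t', he]
      have h4 := Nat.ModEq.cancel_right_of_coprime hco (hmodeq _ _ hb)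
      have h5 : t % m = t' % m := h4
      rw [Nat.mod_eq_of_lt (by omega), Nat.mod_eq_of_lt (by omega)] at h5
      exact h5
    have hdisj : Disjoint S1 S2 := by
      rw [Finset.disjoint_left]
      intro v h1 h2
      have := hS1dd v h1
      have := hS2dd v h2
      omega
    have hcontra : ∀ t < k, ∀ t' < k,
        ((t'*(2*k) : ℕ) : Fin m) = ((t*(2*k) : ℕ) : Fin m) + ((k+1 : ℕ) : Fin m) → False := by
      intro t ht t' ht' heq
      have heq2 : ((t'*(2*k) : ℕ) : Fin m) = ((t*(2*k) + (k+1) : ℕ) : Fin m) := by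
        rw [Nat.cast_add]
        exact heq
      have hmod := hmodeq _ _ heq2
      have h3 : (2*t'+1)*k ≡ (2*t)*k [MOD m] := by
        calc (2*t'+1)*k = t'*(2*k) + k := by ring
          _ ≡ (t*(2*k) + (k+1)) + k [MOD m] := Nat.ModEq.add_right k hmod
          _ = (2*t)*k + m := by rw [hm]; ring
          _ ≡ (2*t)*k [MOD m] := Nat.add_mod_right _ _
      have h4 := Nat.ModEq.cancel_right_of_coprime hcop h3
      have h5 : (2*t'+1) % m = (2*t) % m := h4
      rw [Nat.mod_eq_of_lt (by omega), Nat.mod_eq_of_lt (by omega)] at h5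
      omega
    refine ⟨S1 ∪ S2, ?_, ?_⟩
    · rw [Finset.card_union_of_disjoint hdisj, hcard1, hA, Finset.card_product, Ecard,
        Finset.card_univ, Fintype.card_fin, hS2, Finset.card_image_of_injOn hginj,
        Finset.card_range]
      rw [hm, hj]
      have e1 : (2*j+1)/2 = j := by omega
      have e2 : (2*j+1+1)/2 = j+1 := by omega
      rw [e1]
      have : (2*j)*(2*j+1) + (2*j+1)/2 = (2*(2*j)+1)*j + 2*j := by
        rw [e1]; ring
      omega
    · intro a ha b hb hadj
      rcases Finset.mem_union.mp ha with ha1 | ha2 <;>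
        rcases Finset.mem_union.mp hb with hb1 | hb2
      · have h1 := hS1dd a ha1
        have h2 := hS1dd b hb1
        rcases dd_adj hm3 hadj with h | h | ⟨h, hmm'⟩ <;> omega
      · have h1 := hS1dd a ha1
        have h2 := hS2dd b hb2
        rcases dd_adj hm3 hadj with h | h | ⟨h, hmm'⟩ <;> omega
      · have h1 := hS2dd a ha2
        have h2 := hS1dd b hb1
        rcases dd_adj hm3 hadj with h | h | ⟨h, hmm'⟩ <;> omega
      · obtain ⟨t, ht, rfl⟩ := Finset.mem_image.mp ha2
        obtain ⟨t', ht', rfl⟩ := Finset.mem_image.mp hb2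
        rw [Finset.mem_range] at ht ht'
        rcases rowk_adj hm hm3 hadj (hgdd t) (hgdd t') with h | h <;>
          rw [hgbs, hgbs] at h
        · exact hcontra t ht t' ht' h
        · exact hcontra t' ht' t ht h
  · -- k odd : all even rows
    obtain ⟨j, hj⟩ := hko
    set A : Finset (Fin m × ℕ) :=
      (Finset.univ ×ˢ ((Finset.range (k+1)).filter (fun δ => δ % 2 = 0))) with hA
    have hcond : ∀ p ∈ A, 2*p.2 < m ∨ (2*p.2 = m ∧ p.1.val < p.2) := by
      intro p hp
      rw [hA] at hp
      simp only [Finset.mem_product, Finset.mem_filter, Finset.mem_range] at hp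
      omega
    have heven : ∀ p ∈ A, p.2 % 2 = 0 := by
      intro p hp
      rw [hA] at hp
      simp only [Finset.mem_product, Finset.mem_filter, Finset.mem_range] at hp
      omega
    obtain ⟨hcard, hdd⟩ := image_card_dd A hcond
    refine ⟨A.image (fun p => s(p.1, p.1 + ((p.2 : ℕ) : Fin m))), ?_, ?_⟩
    · rw [hcard, hA, Finset.card_product, Ecard, Finset.card_univ, Fintype.card_fin]
      rw [hm, hj]
      have e1 : (2*j+1+1+1)/2 = j+1 := by omega
      have e2 : (2*j+1+1)/2 = j+1 := by omega
      rw [e1, e2]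
      ring
    · intro a ha b hb hadj
      obtain ⟨p, hp, hpd⟩ := hdd a ha
      obtain ⟨q, hq, hqd⟩ := hdd b hb
      have h1 : dd m a % 2 = 0 := by rw [hpd]; exact heven p hp
      have h2 : dd m b % 2 = 0 := by rw [hqd]; exact heven q hq
      rcases dd_adj hm3 hadj with h | h | ⟨h, hmm'⟩ <;> omega

lemma indepNum_eq {V : Type*} (G : SimpleGraph V) (N : ℕ)
    (hub : ∀ s : Finset V, (∀ a ∈ s, ∀ b ∈ s, ¬ G.Adj a b) → s.card ≤ N)
    (hlb : ∃ s : Finset V, s.card = N ∧ ∀ a ∈ s, ∀ b ∈ s, ¬ G.Adj a b) :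
    indepNum G = N := by
  obtain ⟨s0, hc0, hi0⟩ := hlb
  unfold indepNum
  apply le_antisymm
  · refine csSup_le ⟨N, ?_⟩ ?_
    · exact ⟨s0, hc0, hi0⟩
    · rintro n ⟨s, rfl, hs⟩
      exact hub s hs
  · refine le_csSup ⟨N, ?_⟩ ?_
    · rintro n ⟨s, hcs, his⟩
      exact hcs ▸ hub s his
    · exact ⟨s0, hc0, hi0⟩

end PairCycleAux

end

/-- For the cycle `C_m` with `m ≥ 3`: if `m = 2k+1` then `α(C(C_m)) = k(k+1) + ⌊(k+1)/2⌋`,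
and if `m = 2k` then `α(C(C_m)) = k(k+1)`. -/
theorem indepNum_pairGraph_cycle (m k : ℕ) (hm : 3 ≤ m) :
    (m = 2 * k + 1 → indepNum (pairGraph (cycleG m)) = k * (k + 1) + (k + 1) / 2) ∧
    (m = 2 * k → indepNum (pairGraph (cycleG m)) = k * (k + 1)) := by
  constructor
  · intro hmk
    exact PairCycleAux.indepNum_eq _ _ (fun s hs => PairCycleAux.ub_odd hmk hm hs)
      (PairCycleAux.lb_odd hmk hm)
  · intro hmk
    exact PairCycleAux.indepNum_eq _ _ (fun s hs => PairCycleAux.ub_even hmk hm hs)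
      (PairCycleAux.lb_even hmk hm)
end

section
/- Let m ≥ 4, let T_m denote the double vertex graph of the path P_m on vertices {1,…,m}, and for i ∈ {1,…,m} let R_i = {{i,j} : j ∈ {1,…,m}, j ≠ i}. Then the independence number of the induced subgraph T_m − R_i equals ⌊(m−1)²/4⌋, the independence number of T_{m−1}, for every i. -/
namespace TmAux

def phi (t x : ℕ) : ℕ := if x < t then x else x - 1
def iot (t u : ℕ) : ℕ := if u < t then u else u + 1

lemma phi_iot (t u : ℕ) : phi t (iot t u) = u := by
  unfold phi iot; split_ifs <;> omega

lemma iot_phi {t x : ℕ} (hx : x ≠ t) : iot t (phi t x) = x := by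
  unfold phi iot; split_ifs <;> omega

lemma phi_mono {t x y : ℕ} (hx : x ≠ t) (hy : y ≠ t) (h : x < y) : phi t x < phi t y := by
  unfold phi; split_ifs <;> omega

lemma phi_inj {t x y : ℕ} (hx : x ≠ t) (hy : y ≠ t) (h : phi t x = phi t y) : x = y := by
  unfold phi at h; split_ifs at h <;> omega

lemma iot_mono {t u v : ℕ} (h : u < v) : iot t u < iot t v := by
  unfold iot; split_ifs <;> omega

lemma iot_ne (t u : ℕ) : iot t u ≠ t := by
  unfold iot; split_ifs <;> omega

def nstep (t u v : ℕ) : Prop := (u + 1 = v ∧ v ≠ t) ∨ (v + 1 = u ∧ u ≠ t)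

instance (t u v : ℕ) : Decidable (nstep t u v) := by unfold nstep; infer_instance

lemma nstep_phi {t x y : ℕ} (hx : x ≠ t) (hy : y ≠ t) (h : x + 1 = y ∨ y + 1 = x) :
    nstep t (phi t x) (phi t y) := by
  unfold nstep phi; split_ifs <;> omega

lemma nstep_orig {t x y : ℕ} (hx : x ≠ t) (hy : y ≠ t) (h : nstep t (phi t x) (phi t y)) :
    x + 1 = y ∨ y + 1 = x := by
  unfold nstep phi at h; split_ifs at h <;> omega

/-- The partner map for even-sum vertices. -/
def g (t n : ℕ) (x y : ℕ) : ℕ × ℕ :=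
  if y < t ∨ t ≤ x then (x, y - 1)
  else if (n - t) % 2 = 0 then (x, if (y - t) % 2 = 0 then y + 1 else y - 1)
  else if t % 2 = 0 then (if x % 2 = 0 then x + 1 else x - 1, y)
  else if x = 0 then (0, if (y - t) % 2 = 0 then y + 1 else y - 1)
  else (if x % 2 = 1 then x + 1 else x - 1, y)

lemma g_spec {t n x y : ℕ} (ht : t ≤ n) (h1 : x < y) (h2 : y < n) (he : (x + y) % 2 = 0) :
    (g t n x y).1 < (g t n x y).2 ∧ (g t n x y).2 < n ∧
    ((g t n x y).1 + (g t n x y).2) % 2 = 1 ∧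
    (((g t n x y).1 = x ∧ nstep t y (g t n x y).2) ∨
     ((g t n x y).2 = y ∧ nstep t x (g t n x y).1)) := by
  unfold g nstep; split_ifs <;> dsimp only <;> omega

lemma g_inj {t n x y x' y' : ℕ} (ht : t ≤ n) (h1 : x < y) (h2 : y < n) (he : (x + y) % 2 = 0)
    (h1' : x' < y') (h2' : y' < n) (he' : (x' + y') % 2 = 0)
    (h : g t n x y = g t n x' y') : x = x' ∧ y = y' := by
  unfold g at h; split_ifs at h <;> simp only [Prod.mk.injEq] at h <;> omega



lemma card_filter_parity (n r : ℕ) (hr : r < 2) :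
    ((Finset.range n).filter (fun x => x % 2 = r)).card = (n + 1 - r) / 2 := by
  induction n with
  | zero => simp; omega
  | succ k ih =>
    rw [Finset.range_add_one, Finset.filter_insert]
    split_ifs with h
    · rw [Finset.card_insert_of_notMem (by simp)]
      omega
    · omega

def oddPairs (n : ℕ) : Finset (ℕ × ℕ) :=
  (Finset.range n ×ˢ Finset.range n).filter fun z => z.1 < z.2 ∧ (z.1 + z.2) % 2 = 1

lemma mem_oddPairs {n : ℕ} {z : ℕ × ℕ} :
    z ∈ oddPairs n ↔ z.1 < z.2 ∧ z.2 < n ∧ (z.1 + z.2) % 2 = 1 := by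
  unfold oddPairs
  simp only [Finset.mem_filter, Finset.mem_product, Finset.mem_range]
  constructor
  · rintro ⟨⟨h1, h2⟩, h3, h4⟩; exact ⟨h3, h2, h4⟩
  · rintro ⟨h1, h2, h3⟩; exact ⟨⟨by omega, h2⟩, h1, h3⟩

lemma card_oddPairs (n : ℕ) : (oddPairs n).card = n ^ 2 / 4 := by
  have key : (oddPairs n).card =
      (((Finset.range n).filter (fun x => x % 2 = 0)) ×ˢ
        ((Finset.range n).filter (fun x => x % 2 = 1))).card := by
    apply Finset.card_nbij' (i := fun z => if z.1 % 2 = 0 then z else z.swap)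
      (j := fun z => if z.1 < z.2 then z else z.swap)
    · rintro ⟨u, v⟩ hz
      rw [Finset.mem_coe, mem_oddPairs] at hz
      simp only [Finset.mem_coe, Finset.mem_product, Finset.mem_filter, Finset.mem_range]
      split_ifs with h <;> simp only [Prod.swap_prod_mk] <;> dsimp at * <;> omega
    · rintro ⟨u, v⟩ hz
      simp only [Finset.mem_coe, Finset.mem_product, Finset.mem_filter, Finset.mem_range] at hz
      simp only [Finset.mem_coe, mem_oddPairs]
      split_ifs with h
      · omega
      · simp only [Prod.swap_prod_mk]; omega
    · rintro ⟨u, v⟩ hz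
      rw [Finset.mem_coe, mem_oddPairs] at hz
      dsimp at hz ⊢
      split_ifs with h h2 h3 <;>
        first
          | rfl
          | (simp only [Prod.swap_prod_mk, Prod.mk.injEq]; omega)
          | omega
    · rintro ⟨u, v⟩ hz
      simp only [Finset.mem_coe, Finset.mem_product, Finset.mem_filter, Finset.mem_range] at hz
      dsimp at hz ⊢
      split_ifs with h h2 h3 <;>
        first
          | rfl
          | (simp only [Prod.swap_prod_mk, Prod.mk.injEq]; omega)
          | omega
  rw [key, Finset.card_product, card_filter_parity n 0 (by norm_num),
    card_filter_parity n 1 (by norm_num)]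
  rcases Nat.even_or_odd n with ⟨k, hk⟩ | ⟨k, hk⟩ <;> subst hk
  · have h1 : (k + k) ^ 2 = 4 * (k * k) := by ring
    have e1 : (k + k + 1 - 0) / 2 = k := by omega
    have e2 : (k + k + 1 - 1) / 2 = k := by omega
    rw [e1, e2, h1, Nat.mul_div_cancel_left _ (by norm_num : (0:ℕ) < 4)]
  · have h1 : (2 * k + 1) ^ 2 = 4 * ((k + 1) * k) + 1 := by ring
    have e1 : (2 * k + 1 + 1 - 0) / 2 = k + 1 := by omega
    have e2 : (2 * k + 1 + 1 - 1) / 2 = k := by omega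
    rw [e1, e2, h1]
    generalize (k + 1) * k = M
    omega

variable {m : ℕ}

lemma pairNE (A : {A : Finset (Fin m) // A.card = 2}) : A.1.Nonempty :=
  Finset.card_pos.mp (by rw [A.2]; norm_num)

def coords (t : ℕ) (A : {A : Finset (Fin m) // A.card = 2}) : ℕ × ℕ :=
  (phi t ((A.1.min' (pairNE A)) : ℕ), phi t ((A.1.max' (pairNE A)) : ℕ))

lemma decomp (A : {A : Finset (Fin m) // A.card = 2}) :
    ∃ a b : Fin m, (a : ℕ) < (b : ℕ) ∧ A.1 = {a, b} := by
  obtain ⟨x, y, hxy, h⟩ := Finset.card_eq_two.mp A.2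
  have hv : (x : ℕ) ≠ (y : ℕ) := fun hv => hxy (Fin.val_injective hv)
  rcases Nat.lt_or_ge (x : ℕ) (y : ℕ) with h1 | h1
  · exact ⟨x, y, h1, h⟩
  · exact ⟨y, x, by omega, by rw [h, Finset.pair_comm]⟩

lemma coords_pair {t : ℕ} {a b : Fin m} (hab : (a : ℕ) < (b : ℕ))
    {A : {A : Finset (Fin m) // A.card = 2}} (hA : A.1 = {a, b}) :
    coords t A = (phi t (a : ℕ), phi t (b : ℕ)) := by
  have hmin : A.1.min' (pairNE A) = a := by
    apply le_antisymm
    · exact Finset.min'_le _ _ (by rw [hA]; simp)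
    · apply Finset.le_min'
      intro y hy
      rw [hA] at hy
      simp only [Finset.mem_insert, Finset.mem_singleton] at hy
      rcases hy with rfl | rfl
      · exact le_refl _
      · exact Fin.le_def.mpr (by omega)
  have hmax : A.1.max' (pairNE A) = b := by
    apply le_antisymm
    · apply Finset.max'_le
      intro y hy
      rw [hA] at hy
      simp only [Finset.mem_insert, Finset.mem_singleton] at hy
      rcases hy with rfl | rfl
      · exact Fin.le_def.mpr (by omega)
      · exact le_refl _
    · exact Finset.le_max' _ _ (by rw [hA]; simp)
  unfold coords
  rw [hmin, hmax]

lemma symmDiff_pair {α : Type*} [DecidableEq α] {c x y : α} (hx : x ≠ c) (hy : y ≠ c)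
    (hxy : x ≠ y) : symmDiff ({c, x} : Finset α) {c, y} = {x, y} := by
  ext z
  by_cases h1 : z = c <;> by_cases h2 : z = x <;> by_cases h3 : z = y <;>
    simp_all [Finset.mem_symmDiff]

lemma mem_pair_decomp {a : Fin m} {A : Finset (Fin m)} (hA : A.card = 2) (ha : a ∈ A) :
    ∃ c, c ≠ a ∧ A = {a, c} := by
  obtain ⟨x, y, hxy, rfl⟩ := Finset.card_eq_two.mp hA
  simp only [Finset.mem_insert, Finset.mem_singleton] at ha
  rcases ha with rfl | rfl
  · exact ⟨y, Ne.symm hxy, rfl⟩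
  · exact ⟨x, hxy, Finset.pair_comm x a⟩

lemma symmDiff_structure {A B : Finset (Fin m)} (hA : A.card = 2) (hB : B.card = 2)
    {a b : Fin m} (hab : a ≠ b) (h : symmDiff A B = {a, b}) :
    ∃ c : Fin m, c ≠ a ∧ c ≠ b ∧ ((A = {c, a} ∧ B = {c, b}) ∨ (A = {c, b} ∧ B = {c, a})) := by
  have key : ∀ (X Y : Finset (Fin m)), X.card = 2 → Y.card = 2 → symmDiff X Y = {a, b} →
      ∀ x y : Fin m, x ≠ y → x ∈ X → x ∉ Y → y ∈ Y → y ∉ X → symmDiff X Y = {x, y} →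
      ∃ c, c ≠ x ∧ c ≠ y ∧ X = {c, x} ∧ Y = {c, y} := by
    intro X Y hX hY hXY x y hxy hxX hxY hyY hyX hsd
    obtain ⟨c, hc, hXeq⟩ := mem_pair_decomp hX hxX
    have hcy : c ≠ y := fun hh => hyX (hh ▸ (by rw [hXeq]; simp))
    have hcY : c ∈ Y := by
      by_contra hcY
      have hmem : c ∈ symmDiff X Y :=
        Finset.mem_symmDiff.mpr (Or.inl ⟨by rw [hXeq]; simp, hcY⟩)
      rw [hsd] at hmem
      simp only [Finset.mem_insert, Finset.mem_singleton] at hmem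
      rcases hmem with rfl | rfl
      · exact hc rfl
      · exact hcy rfl
    have hYsub : ({c, y} : Finset (Fin m)) ⊆ Y := by
      intro z hz
      simp only [Finset.mem_insert, Finset.mem_singleton] at hz
      rcases hz with rfl | rfl <;> assumption
    have hYeq : ({c, y} : Finset (Fin m)) = Y :=
      Finset.eq_of_subset_of_card_le hYsub (by rw [hY, Finset.card_pair hcy])
    exact ⟨c, hc, hcy, by rw [hXeq, Finset.pair_comm], hYeq.symm⟩
  have empty_case : ∀ (X Y : Finset (Fin m)), X.card = 2 → Y.card = 2 →
      symmDiff X Y = {a, b} → a ∈ X → a ∉ Y → b ∈ X → b ∉ Y → False := by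
    intro X Y hX hY hsd haX haY hbX hbY
    have hsub : Y ⊆ X := by
      intro z hz
      by_contra hzX
      have hmem : z ∈ symmDiff X Y := Finset.mem_symmDiff.mpr (Or.inr ⟨hz, hzX⟩)
      rw [hsd] at hmem
      simp only [Finset.mem_insert, Finset.mem_singleton] at hmem
      rcases hmem with rfl | rfl
      · exact haY hz
      · exact hbY hz
    have hYX : Y = X := Finset.eq_of_subset_of_card_le hsub (by omega)
    rw [hYX, symmDiff_self] at hsd
    have : a ∈ (⊥ : Finset (Fin m)) := by rw [hsd]; simp
    simp at this
  have hamem : a ∈ symmDiff A B := by rw [h]; simp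
  have hbmem : b ∈ symmDiff A B := by rw [h]; simp
  rw [Finset.mem_symmDiff] at hamem hbmem
  rcases hamem with ⟨haA, haB⟩ | ⟨haB, haA⟩ <;> rcases hbmem with ⟨hbA, hbB⟩ | ⟨hbB, hbA⟩
  · exact absurd (empty_case A B hA hB h haA haB hbA hbB) not_false
  · obtain ⟨c, h1, h2, h3, h4⟩ := key A B hA hB h a b hab haA haB hbB hbA h
    exact ⟨c, h1, h2, Or.inl ⟨h3, h4⟩⟩
  · obtain ⟨c, h1, h2, h3, h4⟩ := key A B hA hB h b a (Ne.symm hab) hbA hbB haB haA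
      (by rw [h, Finset.pair_comm])
    exact ⟨c, h2, h1, Or.inr ⟨h3, h4⟩⟩
  · have := empty_case B A hB hA (by rw [symmDiff_comm, h]) haB haA hbB hbA
    exact absurd this not_false

lemma adj_iff' (A B : {A : Finset (Fin m) // A.card = 2}) :
    (doubleVertexGraph (pathG m)).Adj A B ↔
      A ≠ B ∧ ∃ a b : Fin m, (a : ℕ) + 1 = (b : ℕ) ∧ symmDiff A.1 B.1 = {a, b} := by
  show (SimpleGraph.fromRel _).Adj A B ↔ _
  rw [SimpleGraph.fromRel_adj]
  constructor
  · rintro ⟨hne, h | h⟩ <;> obtain ⟨a, b, hab, hs⟩ := h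
    · rw [pathG, SimpleGraph.fromRel_adj] at hab
      obtain ⟨hne2, h1 | h1⟩ := hab
      · exact ⟨hne, a, b, h1, hs⟩
      · exact ⟨hne, b, a, h1, by rw [hs, Finset.pair_comm]⟩
    · rw [pathG, SimpleGraph.fromRel_adj] at hab
      rw [symmDiff_comm] at hs
      obtain ⟨hne2, h1 | h1⟩ := hab
      · exact ⟨hne, a, b, h1, hs⟩
      · exact ⟨hne, b, a, h1, by rw [hs, Finset.pair_comm]⟩
  · rintro ⟨hne, a, b, hab, hs⟩
    refine ⟨hne, Or.inl ⟨a, b, ?_, hs⟩⟩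
    rw [pathG, SimpleGraph.fromRel_adj]
    exact ⟨fun hh => by rw [hh] at hab; omega, Or.inl hab⟩

lemma val_ne_of_ne {a b : Fin m} (h : a ≠ b) : (a : ℕ) ≠ (b : ℕ) :=
  fun hh => h (Fin.val_injective hh)

lemma adj_step {i : Fin m} {A B : {A : Finset (Fin m) // A.card = 2}}
    (hiA : i ∉ A.1) (hiB : i ∉ B.1)
    (h : (doubleVertexGraph (pathG m)).Adj A B) :
    ((coords (i : ℕ) A).1 = (coords (i : ℕ) B).1 ∧
      nstep (i : ℕ) (coords (i : ℕ) A).2 (coords (i : ℕ) B).2) ∨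
    ((coords (i : ℕ) A).2 = (coords (i : ℕ) B).2 ∧
      nstep (i : ℕ) (coords (i : ℕ) A).1 (coords (i : ℕ) B).1) := by
  rw [adj_iff'] at h
  obtain ⟨hne, a, b, hab, hsd⟩ := h
  have haneb : a ≠ b := fun hh => by rw [hh] at hab; omega
  obtain ⟨c, hca, hcb, hcase⟩ := symmDiff_structure A.2 B.2 haneb hsd
  have haAB : a ∈ A.1 ∨ a ∈ B.1 := by
    have : a ∈ symmDiff A.1 B.1 := by rw [hsd]; simp
    rw [Finset.mem_symmDiff] at this; tauto
  have hbAB : b ∈ A.1 ∨ b ∈ B.1 := by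
    have : b ∈ symmDiff A.1 B.1 := by rw [hsd]; simp
    rw [Finset.mem_symmDiff] at this; tauto
  have hai : (a : ℕ) ≠ (i : ℕ) := by
    refine val_ne_of_ne (fun hh => ?_)
    subst hh; rcases haAB with h' | h' <;> [exact hiA h'; exact hiB h']
  have hbi : (b : ℕ) ≠ (i : ℕ) := by
    refine val_ne_of_ne (fun hh => ?_)
    subst hh; rcases hbAB with h' | h' <;> [exact hiA h'; exact hiB h']
  have hcval_a : (c : ℕ) ≠ (a : ℕ) := val_ne_of_ne hca
  have hcval_b : (c : ℕ) ≠ (b : ℕ) := val_ne_of_ne hcb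
  rcases hcase with ⟨hAeq, hBeq⟩ | ⟨hAeq, hBeq⟩
  · have hci : (c : ℕ) ≠ (i : ℕ) := by
      refine val_ne_of_ne (fun hh => ?_)
      subst hh; exact hiA (by rw [hAeq]; simp)
    rcases Nat.lt_or_ge (c : ℕ) (a : ℕ) with hlt | hge
    · rw [coords_pair hlt hAeq, coords_pair (by omega) hBeq]
      exact Or.inl ⟨rfl, nstep_phi hai hbi (Or.inl hab)⟩
    · have hgt : (b : ℕ) < (c : ℕ) := by omega
      rw [coords_pair (a := a) (b := c) (by omega) (by rw [hAeq, Finset.pair_comm]),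
          coords_pair (a := b) (b := c) hgt (by rw [hBeq, Finset.pair_comm])]
      exact Or.inr ⟨rfl, nstep_phi hai hbi (Or.inl hab)⟩
  · have hci : (c : ℕ) ≠ (i : ℕ) := by
      refine val_ne_of_ne (fun hh => ?_)
      subst hh; exact hiA (by rw [hAeq]; simp)
    rcases Nat.lt_or_ge (c : ℕ) (a : ℕ) with hlt | hge
    · rw [coords_pair (by omega) hAeq, coords_pair hlt hBeq]
      exact Or.inl ⟨rfl, nstep_phi hbi hai (Or.inr hab)⟩
    · have hgt : (b : ℕ) < (c : ℕ) := by omega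
      rw [coords_pair (a := b) (b := c) hgt (by rw [hAeq, Finset.pair_comm]),
          coords_pair (a := a) (b := c) (by omega) (by rw [hBeq, Finset.pair_comm])]
      exact Or.inr ⟨rfl, nstep_phi hbi hai (Or.inr hab)⟩

lemma mem_val_ne_i {i : Fin m} {A : {A : Finset (Fin m) // A.card = 2}}
    (hiA : i ∉ A.1) {a : Fin m} (ha : a ∈ A.1) : (a : ℕ) ≠ (i : ℕ) :=
  val_ne_of_ne (fun hh => hiA (hh ▸ ha))

lemma adj_of_step {i : Fin m} {A B : {A : Finset (Fin m) // A.card = 2}}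
    (hiA : i ∉ A.1) (hiB : i ∉ B.1)
    (h : ((coords (i : ℕ) A).1 = (coords (i : ℕ) B).1 ∧
            nstep (i : ℕ) (coords (i : ℕ) A).2 (coords (i : ℕ) B).2) ∨
         ((coords (i : ℕ) A).2 = (coords (i : ℕ) B).2 ∧
            nstep (i : ℕ) (coords (i : ℕ) A).1 (coords (i : ℕ) B).1)) :
    (doubleVertexGraph (pathG m)).Adj A B := by
  obtain ⟨a1, b1, hab1, hA⟩ := decomp A
  obtain ⟨a2, b2, hab2, hB⟩ := decomp B
  rw [coords_pair hab1 hA, coords_pair hab2 hB] at h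
  have ha1 : (a1 : ℕ) ≠ (i : ℕ) := mem_val_ne_i hiA (by rw [hA]; simp)
  have hb1 : (b1 : ℕ) ≠ (i : ℕ) := mem_val_ne_i hiA (by rw [hA]; simp)
  have ha2 : (a2 : ℕ) ≠ (i : ℕ) := mem_val_ne_i hiB (by rw [hB]; simp)
  have hb2 : (b2 : ℕ) ≠ (i : ℕ) := mem_val_ne_i hiB (by rw [hB]; simp)
  rw [adj_iff']
  rcases h with ⟨heq, hst⟩ | ⟨heq, hst⟩
  · dsimp at heq hst
    have haa : a1 = a2 := Fin.val_injective (phi_inj ha1 ha2 heq)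
    have hor := nstep_orig hb1 hb2 hst
    have hbne : (b1 : ℕ) ≠ (b2 : ℕ) := by omega
    have hABne : A ≠ B := by
      intro hh
      rw [hh] at hA
      rw [hA] at hB
      have : b1 ∈ ({a2, b2} : Finset (Fin m)) := by rw [← hB]; simp
      simp only [Finset.mem_insert, Finset.mem_singleton] at this
      rcases this with rfl | rfl
      · subst haa; omega
      · exact hbne rfl
    refine ⟨hABne, ?_⟩
    subst haa
    have hx : b1 ≠ a1 := Fin.ne_of_val_ne (by omega)
    have hy : b2 ≠ a1 := Fin.ne_of_val_ne (by omega)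
    have hxy : b1 ≠ b2 := Fin.ne_of_val_ne hbne
    rcases hor with h1 | h1
    · exact ⟨b1, b2, h1, by rw [hA, hB, symmDiff_pair hx hy hxy]⟩
    · exact ⟨b2, b1, h1, by
        rw [hA, hB, symmDiff_pair hx hy hxy, Finset.pair_comm]⟩
  · dsimp at heq hst
    have hbb : b1 = b2 := Fin.val_injective (phi_inj hb1 hb2 heq)
    have hor := nstep_orig ha1 ha2 hst
    have hane : (a1 : ℕ) ≠ (a2 : ℕ) := by omega
    have hABne : A ≠ B := by
      intro hh
      rw [hh] at hA
      rw [hA] at hB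
      have : a1 ∈ ({a2, b2} : Finset (Fin m)) := by rw [← hB]; simp
      simp only [Finset.mem_insert, Finset.mem_singleton] at this
      rcases this with rfl | rfl
      · exact hane rfl
      · subst hbb; omega
    refine ⟨hABne, ?_⟩
    subst hbb
    have hx : a1 ≠ b1 := Fin.ne_of_val_ne (by omega)
    have hy : a2 ≠ b1 := Fin.ne_of_val_ne (by omega)
    have hxy : a1 ≠ a2 := Fin.ne_of_val_ne hane
    rcases hor with h1 | h1
    · exact ⟨a1, a2, h1, by
        rw [hA, hB, Finset.pair_comm a1 b1, Finset.pair_comm a2 b1, symmDiff_pair hx hy hxy]⟩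
    · exact ⟨a2, a1, h1, by
        rw [hA, hB, Finset.pair_comm a1 b1, Finset.pair_comm a2 b1, symmDiff_pair hx hy hxy,
          Finset.pair_comm]⟩

def build (t u v : ℕ) (h1 : u < v) (h2 : v + 1 < m) (h3 : t < m) :
    {A : Finset (Fin m) // A.card = 2} :=
  ⟨{⟨iot t u, by unfold iot; split_ifs <;> omega⟩,
    ⟨iot t v, by unfold iot; split_ifs <;> omega⟩},
    Finset.card_pair (by
      intro hc
      have h := congrArg Fin.val hc
      simp only at h
      exact absurd h (Nat.ne_of_lt (iot_mono h1)))⟩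

lemma build_not_mem {t u v : ℕ} (h1 : u < v) (h2 : v + 1 < m) (h3 : t < m)
    {i : Fin m} (hi : (i : ℕ) = t) : i ∉ (build t u v h1 h2 h3).1 := by
  intro hmem
  simp only [build, Finset.mem_insert, Finset.mem_singleton] at hmem
  rcases hmem with hc | hc <;> (
    have h := congrArg Fin.val hc
    simp only [hi] at h)
  · exact iot_ne t u h.symm
  · exact iot_ne t v h.symm

lemma build_coords {t u v : ℕ} (h1 : u < v) (h2 : v + 1 < m) (h3 : t < m) :
    coords t (build t u v h1 h2 h3) = (u, v) := by
  rw [coords_pair (a := ⟨iot t u, by unfold iot; split_ifs <;> omega⟩)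
      (b := ⟨iot t v, by unfold iot; split_ifs <;> omega⟩) (by simpa using iot_mono h1) rfl]
  simp [phi_iot]

lemma coords_fst_lt_snd {i : Fin m} {A : {A : Finset (Fin m) // A.card = 2}}
    (hiA : i ∉ A.1) : (coords (i : ℕ) A).1 < (coords (i : ℕ) A).2 := by
  obtain ⟨a, b, hab, hA⟩ := decomp A
  rw [coords_pair hab hA]
  exact phi_mono (mem_val_ne_i hiA (by rw [hA]; simp))
    (mem_val_ne_i hiA (by rw [hA]; simp)) hab

lemma coords_snd_lt {i : Fin m} {A : {A : Finset (Fin m) // A.card = 2}}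
    (hiA : i ∉ A.1) : (coords (i : ℕ) A).2 < m - 1 := by
  obtain ⟨a, b, hab, hA⟩ := decomp A
  rw [coords_pair hab hA]
  have h1 : (b : ℕ) < m := b.isLt
  have h2 : (b : ℕ) ≠ (i : ℕ) := mem_val_ne_i hiA (by rw [hA]; simp)
  have h3 : (i : ℕ) < m := i.isLt
  unfold phi; split_ifs <;> omega

lemma coords_injective {i : Fin m} {A B : {A : Finset (Fin m) // A.card = 2}}
    (hiA : i ∉ A.1) (hiB : i ∉ B.1)
    (h : coords (i : ℕ) A = coords (i : ℕ) B) : A = B := by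
  obtain ⟨a1, b1, hab1, hA⟩ := decomp A
  obtain ⟨a2, b2, hab2, hB⟩ := decomp B
  rw [coords_pair hab1 hA, coords_pair hab2 hB, Prod.mk.injEq] at h
  have e1 : a1 = a2 := Fin.val_injective (phi_inj
    (mem_val_ne_i hiA (by rw [hA]; simp)) (mem_val_ne_i hiB (by rw [hB]; simp)) h.1)
  have e2 : b1 = b2 := Fin.val_injective (phi_inj
    (mem_val_ne_i hiA (by rw [hA]; simp)) (mem_val_ne_i hiB (by rw [hB]; simp)) h.2)
  apply Subtype.ext
  rw [hA, hB, e1, e2]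


open scoped Classical in
noncomputable def Fmap (m : ℕ) (i : Fin m)
    (A : ↥{A : {A : Finset (Fin m) // A.card = 2} | i ∉ A.1}) :
    ↥{A : {A : Finset (Fin m) // A.card = 2} | i ∉ A.1} :=
  if ((coords (i : ℕ) A.1).1 + (coords (i : ℕ) A.1).2) % 2 = 1 then A
  else if h : ∃ B : ↥{A : {A : Finset (Fin m) // A.card = 2} | i ∉ A.1},
      coords (i : ℕ) B.1 = g (i : ℕ) (m - 1) (coords (i : ℕ) A.1).1 (coords (i : ℕ) A.1).2
    then h.choose else A

lemma Fmap_odd {m : ℕ} {i : Fin m} {A : ↥{A : {A : Finset (Fin m) // A.card = 2} | i ∉ A.1}}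
    (h : ((coords (i : ℕ) A.1).1 + (coords (i : ℕ) A.1).2) % 2 = 1) : Fmap m i A = A := by
  unfold Fmap; rw [if_pos h]

lemma Fmap_even {m : ℕ} {i : Fin m} {A : ↥{A : {A : Finset (Fin m) // A.card = 2} | i ∉ A.1}}
    (h : ¬ ((coords (i : ℕ) A.1).1 + (coords (i : ℕ) A.1).2) % 2 = 1)
    (hex : ∃ B : ↥{A : {A : Finset (Fin m) // A.card = 2} | i ∉ A.1},
      coords (i : ℕ) B.1 = g (i : ℕ) (m - 1) (coords (i : ℕ) A.1).1 (coords (i : ℕ) A.1).2) :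
    coords (i : ℕ) (Fmap m i A).1
      = g (i : ℕ) (m - 1) (coords (i : ℕ) A.1).1 (coords (i : ℕ) A.1).2 := by
  unfold Fmap
  rw [if_neg h, dif_pos hex]
  exact hex.choose_spec

end TmAux

/-- For `m ≥ 4` and every `i ∈ {1,…,m}`, the independence number of the induced subgraph
`T_m − R_i` of the double vertex graph of `P_m` (obtained by deleting every 2-subset
containing `i`) equals `⌊(m−1)²/4⌋ = α(T_{m−1})`. -/
theorem indepNum_Tm_delete_Ri (m : ℕ) (hm : 4 ≤ m) (i : Fin m) :
    indepNum (SimpleGraph.induce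
        {A : {A : Finset (Fin m) // A.card = 2} | i ∉ A.1}
        (doubleVertexGraph (pathG m))) = (m - 1) ^ 2 / 4 := by
  classical
  have hti : (i : ℕ) < m := i.isLt
  have hmemS : ∀ A : ↥{A : {A : Finset (Fin m) // A.card = 2} | i ∉ A.1}, i ∉ A.1.1 :=
    fun A => A.2
  -- the Finset of all odd-coordinate-sum vertices
  set SOdd : Finset ↥{A : {A : Finset (Fin m) // A.card = 2} | i ∉ A.1} :=
    Finset.univ.filter
      (fun A => ((TmAux.coords (i : ℕ) A.1).1 + (TmAux.coords (i : ℕ) A.1).2) % 2 = 1)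
    with hSOdd
  have hmemSOdd : ∀ A, A ∈ SOdd ↔
      ((TmAux.coords (i : ℕ) A.1).1 + (TmAux.coords (i : ℕ) A.1).2) % 2 = 1 := by
    intro A; rw [hSOdd, Finset.mem_filter]; simp
  have hcard : SOdd.card = (m - 1) ^ 2 / 4 := by
    rw [← TmAux.card_oddPairs (m - 1)]
    apply Finset.card_bij (i := fun A _ => TmAux.coords (i : ℕ) A.1)
    · intro A hA
      rw [hmemSOdd] at hA
      rw [TmAux.mem_oddPairs]
      exact ⟨TmAux.coords_fst_lt_snd (hmemS A), TmAux.coords_snd_lt (hmemS A), hA⟩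
    · intro A hA B hB h
      exact Subtype.ext (TmAux.coords_injective (hmemS A) (hmemS B) h)
    · intro z hz
      rw [TmAux.mem_oddPairs] at hz
      refine ⟨⟨TmAux.build (i : ℕ) z.1 z.2 hz.1 (by omega) hti,
        TmAux.build_not_mem hz.1 (by omega) hti rfl⟩, ?_, ?_⟩
      · rw [hmemSOdd, TmAux.build_coords]
        exact hz.2.2
      · rw [TmAux.build_coords]
  -- the upper bound for every independent set
  have hub : ∀ k ∈ {n | ∃ s : Finset ↥{A : {A : Finset (Fin m) // A.card = 2} | i ∉ A.1},
      s.card = n ∧ ∀ a ∈ s, ∀ b ∈ s,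
        ¬ (SimpleGraph.induce {A : {A : Finset (Fin m) // A.card = 2} | i ∉ A.1}
            (doubleVertexGraph (pathG m))).Adj a b},
      k ≤ (m - 1) ^ 2 / 4 := by
    rintro k ⟨s, rfl, hind⟩
    rw [← hcard]
    have hor : ∀ A : ↥{A : {A : Finset (Fin m) // A.card = 2} | i ∉ A.1},
        ¬ ((TmAux.coords (i : ℕ) A.1).1 + (TmAux.coords (i : ℕ) A.1).2) % 2 = 1 →
        ∃ B : ↥{A : {A : Finset (Fin m) // A.card = 2} | i ∉ A.1},
          TmAux.coords (i : ℕ) B.1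
            = TmAux.g (i : ℕ) (m - 1) (TmAux.coords (i : ℕ) A.1).1
                (TmAux.coords (i : ℕ) A.1).2 := by
      intro A hodd
      obtain ⟨g1, g2, g3, g4⟩ := TmAux.g_spec (t := (i : ℕ)) (n := m - 1) (by omega)
        (TmAux.coords_fst_lt_snd (hmemS A)) (TmAux.coords_snd_lt (hmemS A)) (by omega)
      refine ⟨⟨TmAux.build (i : ℕ) _ _ g1 (by omega) hti,
        TmAux.build_not_mem g1 (by omega) hti rfl⟩, ?_⟩
      rw [TmAux.build_coords]
    apply Finset.card_le_card_of_injOn (TmAux.Fmap m i)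
    · intro A hA
      rw [Finset.mem_coe, hmemSOdd]
      by_cases h : ((TmAux.coords (i : ℕ) A.1).1 + (TmAux.coords (i : ℕ) A.1).2) % 2 = 1
      · rw [TmAux.Fmap_odd h]; exact h
      · rw [TmAux.Fmap_even h (hor A h)]
        obtain ⟨g1, g2, g3, g4⟩ := TmAux.g_spec (t := (i : ℕ)) (n := m - 1) (by omega)
          (TmAux.coords_fst_lt_snd (hmemS A)) (TmAux.coords_snd_lt (hmemS A)) (by omega)
        exact g3
    · intro A hA B hB hFAB
      simp only [Finset.mem_coe] at hA hB
      by_cases hA1 : ((TmAux.coords (i : ℕ) A.1).1 + (TmAux.coords (i : ℕ) A.1).2) % 2 = 1 <;>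
        by_cases hB1 : ((TmAux.coords (i : ℕ) B.1).1 + (TmAux.coords (i : ℕ) B.1).2) % 2 = 1
      · rwa [TmAux.Fmap_odd hA1, TmAux.Fmap_odd hB1] at hFAB
      · -- A odd, B even : A = Fmap B, contradiction with independence
        exfalso
        rw [TmAux.Fmap_odd hA1] at hFAB
        have hcoords : TmAux.coords (i : ℕ) A.1
            = TmAux.g (i : ℕ) (m - 1) (TmAux.coords (i : ℕ) B.1).1
                (TmAux.coords (i : ℕ) B.1).2 := by
          rw [hFAB]; exact TmAux.Fmap_even hB1 (hor B hB1)
        obtain ⟨g1, g2, g3, g4⟩ := TmAux.g_spec (t := (i : ℕ)) (n := m - 1) (by omega)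
          (TmAux.coords_fst_lt_snd (hmemS B)) (TmAux.coords_snd_lt (hmemS B)) (by omega)
        rw [← hcoords] at g4
        have hadj : (doubleVertexGraph (pathG m)).Adj B.1 A.1 := by
          apply TmAux.adj_of_step (hmemS B) (hmemS A)
          rcases g4 with ⟨e, hst⟩ | ⟨e, hst⟩
          · exact Or.inl ⟨e.symm, hst⟩
          · exact Or.inr ⟨e.symm, hst⟩
        exact hind B hB A hA hadj
      · -- B odd, A even
        exfalso
        rw [TmAux.Fmap_odd hB1] at hFAB
        have hcoords : TmAux.coords (i : ℕ) B.1
            = TmAux.g (i : ℕ) (m - 1) (TmAux.coords (i : ℕ) A.1).1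
                (TmAux.coords (i : ℕ) A.1).2 := by
          rw [← hFAB]; exact TmAux.Fmap_even hA1 (hor A hA1)
        obtain ⟨g1, g2, g3, g4⟩ := TmAux.g_spec (t := (i : ℕ)) (n := m - 1) (by omega)
          (TmAux.coords_fst_lt_snd (hmemS A)) (TmAux.coords_snd_lt (hmemS A)) (by omega)
        rw [← hcoords] at g4
        have hadj : (doubleVertexGraph (pathG m)).Adj A.1 B.1 := by
          apply TmAux.adj_of_step (hmemS A) (hmemS B)
          rcases g4 with ⟨e, hst⟩ | ⟨e, hst⟩
          · exact Or.inl ⟨e.symm, hst⟩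
          · exact Or.inr ⟨e.symm, hst⟩
        exact hind A hA B hB hadj
      · -- both even
        have e1 := TmAux.Fmap_even hA1 (hor A hA1)
        have e2 := TmAux.Fmap_even hB1 (hor B hB1)
        rw [hFAB] at e1
        rw [e2] at e1
        obtain ⟨c1, c2⟩ := TmAux.g_inj (t := (i : ℕ)) (n := m - 1) (by omega)
          (TmAux.coords_fst_lt_snd (hmemS B)) (TmAux.coords_snd_lt (hmemS B)) (by omega)
          (TmAux.coords_fst_lt_snd (hmemS A)) (TmAux.coords_snd_lt (hmemS A)) (by omega) e1
        refine Subtype.ext (TmAux.coords_injective (hmemS A) (hmemS B) ?_)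
        exact Prod.ext c1.symm c2.symm
  -- independence of SOdd
  have hindep : ∀ a ∈ SOdd, ∀ b ∈ SOdd,
      ¬ (SimpleGraph.induce {A : {A : Finset (Fin m) // A.card = 2} | i ∉ A.1}
          (doubleVertexGraph (pathG m))).Adj a b := by
    intro A hA B hB hadj
    rw [hmemSOdd] at hA hB
    have hstep := TmAux.adj_step (hmemS A) (hmemS B) hadj
    unfold TmAux.nstep at hstep
    omega
  unfold indepNum
  apply le_antisymm
  · exact csSup_le ⟨0, ∅, by simp⟩ hub
  · exact le_csSup ⟨(m - 1) ^ 2 / 4, fun k hk => hub k hk⟩ ⟨SOdd, hcard, hindep⟩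
end

section
/- Let m ≥ 4, T_m the double vertex graph of P_m, and R_i = {{i,j} : j ≠ i}. If S ⊆ {1,…,m} is nonempty and contains no two consecutive integers, then α(T_m − ∪_{i∈S} R_i) ≤ ⌊(m−1)²/4⌋; moreover if |S| ≥ 2 this inequality is strict. -/
/-- grid adjacency on ordered pair coordinates -/
def Adj2 (x y : ℕ × ℕ) : Prop :=
  (x.1 = y.1 ∧ (x.2 = y.2 + 1 ∨ y.2 = x.2 + 1)) ∨
  (x.2 = y.2 ∧ (x.1 = y.1 + 1 ∨ y.1 = x.1 + 1))

lemma consec_bound (s : Finset ℕ) (l L : ℕ)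
    (hmem : ∀ b ∈ s, l ≤ b ∧ b < l + L)
    (hnc : ∀ b ∈ s, b + 1 ∉ s) : s.card ≤ (L + 1) / 2 := by
  have : s.card ≤ (Finset.range ((L+1)/2)).card := by
    apply Finset.card_le_card_of_injOn (fun b => (b - l) / 2)
    · intro b hb
      have := hmem b hb
      simp only [Finset.mem_coe, Finset.mem_range]
      omega
    · intro b₁ h₁ b₂ h₂ h
      simp only at h
      have m1 := hmem b₁ h₁
      have m2 := hmem b₂ h₂
      by_contra hne
      rcases Nat.lt_or_ge b₁ b₂ with hlt | hge
      · have : b₂ = b₁ + 1 := by omega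
        exact hnc b₁ h₁ (this ▸ h₂)
      · have : b₁ = b₂ + 1 := by omega
        exact hnc b₂ h₂ (this ▸ h₁)
  simpa using this

lemma div4 (x k r : ℕ) (h : x = 4 * k + r) (hr : r < 4) : x / 4 = k := by omega
lemma div2 (x k r : ℕ) (h : x = 2 * k + r) (hr : r < 2) : x / 2 = k := by omega

lemma sum_halves (n : ℕ) : (∑ t ∈ Finset.range n, (t + 1) / 2) = n ^ 2 / 4 := by
  induction n with
  | zero => simp
  | succ k ih =>
    rw [Finset.sum_range_succ, ih]
    rcases Nat.even_or_odd k with ⟨c, hc⟩ | ⟨c, hc⟩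
    · subst hc
      have h1 : (c + c) ^ 2 / 4 = c * c := div4 _ _ 0 (by ring) (by norm_num)
      have h2 : (c + c + 1) ^ 2 / 4 = c * c + c := div4 _ _ 1 (by ring) (by norm_num)
      have h3 : (c + c + 1) / 2 = c := by omega
      rw [h1, h2, h3]
    · subst hc
      have h1 : (2 * c + 1) ^ 2 / 4 = c * c + c := div4 _ _ 1 (by ring) (by norm_num)
      have h2 : (2 * c + 1 + 1) ^ 2 / 4 = (c + 1) * (c + 1) := div4 _ _ 0 (by ring) (by norm_num)
      have h3 : (2 * c + 1 + 1) / 2 = c + 1 := by omega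
      rw [h1, h2, h3]
      ring

lemma sum_tri (l k : ℕ) : (∑ a ∈ Finset.Ico l k, (k - a) / 2) = (k - l) ^ 2 / 4 := by
  rw [Finset.sum_Ico_eq_sum_range]
  have : ∀ i ∈ Finset.range (k - l), (k - (l + i)) / 2 = ((k - l) - i) / 2 := by
    intro i hi; omega
  rw [Finset.sum_congr rfl this]
  set n := k - l with hn
  have := Finset.sum_range_reflect (fun j => (j + 1) / 2) n
  have heq : ∀ j ∈ Finset.range n, (n - 1 - j + 1) / 2 = (n - j) / 2 := by
    intro j hj; simp only [Finset.mem_range] at hj; omega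
  rw [Finset.sum_congr rfl heq] at this
  rw [this, sum_halves]

lemma tri_bound (I : Finset (ℕ × ℕ)) (l k : ℕ)
    (hsub : ∀ x ∈ I, l ≤ x.1 ∧ x.1 < x.2 ∧ x.2 < k)
    (hind : ∀ x ∈ I, ∀ y ∈ I, ¬ Adj2 x y) : I.card ≤ (k - l) ^ 2 / 4 := by
  rw [Finset.card_eq_sum_card_fiberwise (f := Prod.fst) (t := Finset.Ico l k)
    (fun x hx => by have := hsub x hx; simp only [Finset.mem_coe, Finset.mem_Ico]; omega)]
  calc (∑ a ∈ Finset.Ico l k, (I.filter fun x => x.1 = a).card)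
      ≤ ∑ a ∈ Finset.Ico l k, (k - a) / 2 := by
        apply Finset.sum_le_sum
        intro a ha
        set F := I.filter fun x => x.1 = a with hF
        have hmemF : ∀ x ∈ F, x.1 = a ∧ a < x.2 ∧ x.2 < k := by
          intro x hx
          rw [hF, Finset.mem_filter] at hx
          have := hsub x hx.1
          exact ⟨hx.2, by omega, by omega⟩
        have himg : F.card = (F.image Prod.snd).card := by
          rw [Finset.card_image_of_injOn]
          intro x hx y hy h
          have hx1 := (hmemF x hx).1
          have hy1 := (hmemF y hy).1
          exact Prod.ext (hx1.trans hy1.symm) h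
        rw [himg]
        have : (F.image Prod.snd).card ≤ (k - 1 - a + 1) / 2 := by
          apply consec_bound _ (a + 1) (k - 1 - a)
          · intro b hb
            simp only [Finset.mem_image] at hb
            obtain ⟨x, hx, rfl⟩ := hb
            have := hmemF x hx
            omega
          · intro b hb hb1
            simp only [Finset.mem_image] at hb hb1
            obtain ⟨x, hx, hx2⟩ := hb
            obtain ⟨y, hy, hy2⟩ := hb1
            have hxF : x ∈ I := (Finset.mem_filter.mp hx).1
            have hyF : y ∈ I := (Finset.mem_filter.mp hy).1
            apply hind x hxF y hyF
            left
            exact ⟨(hmemF x hx).1.trans (hmemF y hy).1.symm, Or.inr (by omega)⟩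
        calc (F.image Prod.snd).card ≤ (k - 1 - a + 1) / 2 := this
          _ ≤ (k - a) / 2 := by omega
    _ = (k - l) ^ 2 / 4 := sum_tri l k

lemma rect_bound (I : Finset (ℕ × ℕ)) (p₁ p₂ q₁ q₂ : ℕ)
    (hsub : ∀ x ∈ I, p₁ ≤ x.1 ∧ x.1 < p₂ ∧ q₁ ≤ x.2 ∧ x.2 < q₂)
    (hind : ∀ x ∈ I, ∀ y ∈ I, ¬ Adj2 x y) :
    I.card ≤ ((p₂ - p₁) * (q₂ - q₁) + 1) / 2 := by
  rcases Nat.even_or_odd (q₂ - q₁) with ⟨d, hd⟩ | ⟨d, hd⟩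
  · -- even : horizontal pairing only
    have hcard : I.card ≤ ((Finset.Ico p₁ p₂) ×ˢ (Finset.range d)).card := by
      apply Finset.card_le_card_of_injOn (fun x => (x.1, (x.2 - q₁) / 2))
      · intro x hx
        have := hsub x hx
        simp only [Finset.mem_coe, Finset.mem_product, Finset.mem_Ico, Finset.mem_range]
        omega
      · intro x hx y hy h
        simp only [Prod.mk.injEq] at h
        have hx' := hsub x hx
        have hy' := hsub y hy
        by_contra hne
        have h2 : x.2 ≠ y.2 := by
          intro he
          exact hne (Prod.ext h.1 he)
        have : x.2 = y.2 + 1 ∨ y.2 = x.2 + 1 := by omega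
        exact hind x hx y hy (Or.inl ⟨h.1, this⟩)
    rw [Finset.card_product, Nat.card_Ico, Finset.card_range] at hcard
    have he : (p₂ - p₁) * (q₂ - q₁) + 1 = 2 * ((p₂ - p₁) * d) + 1 := by rw [hd]; ring
    rw [he]
    generalize (p₂ - p₁) * d = K at *
    omega
  · -- odd
    have hcard : I.card ≤ (((Finset.Ico p₁ p₂) ×ˢ (Finset.range d)) ∪
        ((Finset.range ((p₂ - p₁ + 1) / 2)) ×ˢ ({d} : Finset ℕ))).card := by
      apply Finset.card_le_card_of_injOn
        (fun x => if (x.2 - q₁) / 2 < d then (x.1, (x.2 - q₁) / 2) else ((x.1 - p₁) / 2, d))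
      · intro x hx
        have := hsub x hx
        by_cases hc : (x.2 - q₁) / 2 < d
        · simp only [if_pos hc]
          simp only [Finset.mem_coe, Finset.mem_union, Finset.mem_product, Finset.mem_Ico, Finset.mem_range]
          left; exact ⟨⟨by omega, by omega⟩, hc⟩
        · simp only [if_neg hc]
          simp only [Finset.mem_coe, Finset.mem_union, Finset.mem_product, Finset.mem_range,
            Finset.mem_singleton]
          right; exact ⟨by omega, trivial⟩
      · intro x hx y hy h
        have hx' := hsub x hx
        have hy' := hsub y hy
        by_contra hne
        by_cases hcx : (x.2 - q₁) / 2 < d <;> by_cases hcy : (y.2 - q₁) / 2 < d <;>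
          simp only [hcx, hcy, if_true, if_false, Prod.mk.injEq] at h
        · have h2 : x.2 ≠ y.2 := fun he => hne (Prod.ext h.1 he)
          have : x.2 = y.2 + 1 ∨ y.2 = x.2 + 1 := by omega
          exact hind x hx y hy (Or.inl ⟨h.1, this⟩)
        · omega
        · omega
        · have h2 : x.2 = y.2 := by omega
          have h1 : x.1 ≠ y.1 := fun he => hne (Prod.ext he h2)
          have : x.1 = y.1 + 1 ∨ y.1 = x.1 + 1 := by omega
          exact hind x hx y hy (Or.inr ⟨h2, this⟩)
    have hle : (((Finset.Ico p₁ p₂) ×ˢ (Finset.range d)) ∪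
        ((Finset.range ((p₂ - p₁ + 1) / 2)) ×ˢ ({d} : Finset ℕ))).card ≤
        (p₂ - p₁) * d + (p₂ - p₁ + 1) / 2 := by
      calc _ ≤ ((Finset.Ico p₁ p₂) ×ˢ (Finset.range d)).card +
            ((Finset.range ((p₂ - p₁ + 1) / 2)) ×ˢ ({d} : Finset ℕ)).card :=
              Finset.card_union_le _ _
        _ = (p₂ - p₁) * d + (p₂ - p₁ + 1) / 2 := by
            rw [Finset.card_product, Finset.card_product, Nat.card_Ico, Finset.card_range,
              Finset.card_range, Finset.card_singleton]
            ring
    have he : (p₂ - p₁) * (q₂ - q₁) + 1 = 2 * ((p₂ - p₁) * d) + (p₂ - p₁) + 1 := by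
      rw [hd]; ring
    rw [he]
    have := hcard.trans hle
    generalize (p₂ - p₁) * d = K at *
    omega
lemma arith1 (p q : ℕ) : p ^ 2 / 4 + q ^ 2 / 4 + (p * q + 1) / 2 = (p + q) ^ 2 / 4 := by
  rcases Nat.even_or_odd p with ⟨a, ha⟩ | ⟨a, ha⟩ <;>
    rcases Nat.even_or_odd q with ⟨b, hb⟩ | ⟨b, hb⟩ <;> subst ha <;> subst hb
  · have h1 : (a + a) ^ 2 / 4 = a * a := div4 _ _ 0 (by ring) (by norm_num)
    have h2 : (b + b) ^ 2 / 4 = b * b := div4 _ _ 0 (by ring) (by norm_num)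
    have h3 : ((a + a) * (b + b) + 1) / 2 = 2 * (a * b) := div2 _ _ 1 (by ring) (by norm_num)
    have h4 : ((a + a) + (b + b)) ^ 2 / 4 = a * a + 2 * (a * b) + b * b := div4 _ _ 0 (by ring) (by norm_num)
    rw [h1, h2, h3, h4]; ring
  · have h1 : (a + a) ^ 2 / 4 = a * a := div4 _ _ 0 (by ring) (by norm_num)
    have h2 : (2 * b + 1) ^ 2 / 4 = b * b + b := div4 _ _ 1 (by ring) (by norm_num)
    have h3 : ((a + a) * (2 * b + 1) + 1) / 2 = 2 * (a * b) + a := div2 _ _ 1 (by ring) (by norm_num)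
    have h4 : ((a + a) + (2 * b + 1)) ^ 2 / 4 = a * a + 2 * (a * b) + b * b + a + b := div4 _ _ 1 (by ring) (by norm_num)
    rw [h1, h2, h3, h4]; ring
  · have h1 : (2 * a + 1) ^ 2 / 4 = a * a + a := div4 _ _ 1 (by ring) (by norm_num)
    have h2 : (b + b) ^ 2 / 4 = b * b := div4 _ _ 0 (by ring) (by norm_num)
    have h3 : ((2 * a + 1) * (b + b) + 1) / 2 = 2 * (a * b) + b := div2 _ _ 1 (by ring) (by norm_num)
    have h4 : ((2 * a + 1) + (b + b)) ^ 2 / 4 = a * a + 2 * (a * b) + b * b + a + b := div4 _ _ 1 (by ring) (by norm_num)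
    rw [h1, h2, h3, h4]; ring
  · have h1 : (2 * a + 1) ^ 2 / 4 = a * a + a := div4 _ _ 1 (by ring) (by norm_num)
    have h2 : (2 * b + 1) ^ 2 / 4 = b * b + b := div4 _ _ 1 (by ring) (by norm_num)
    have h3 : ((2 * a + 1) * (2 * b + 1) + 1) / 2 = 2 * (a * b) + a + b + 1 := div2 _ _ 0 (by ring) (by norm_num)
    have h4 : ((2 * a + 1) + (2 * b + 1)) ^ 2 / 4 = a * a + 2 * (a * b) + b * b + 2 * a + 2 * b + 1 := div4 _ _ 0 (by ring) (by norm_num)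
    rw [h1, h2, h3, h4]; ring

lemma arith2 (p q r : ℕ) (hq : 1 ≤ q) :
    p ^ 2 / 4 + q ^ 2 / 4 + r ^ 2 / 4 + (p * q + 1) / 2 + (p * r + 1) / 2 + (q * r + 1) / 2 + 1 ≤ (p + q + r + 1) ^ 2 / 4 := by
  rcases Nat.even_or_odd p with ⟨a, ha⟩ | ⟨a, ha⟩ <;>
    rcases Nat.even_or_odd q with ⟨b, hb⟩ | ⟨b, hb⟩ <;>
    rcases Nat.even_or_odd r with ⟨c, hc⟩ | ⟨c, hc⟩ <;> subst ha <;> subst hb <;> subst hc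
  · have h1 : (a + a) ^ 2 / 4 = a * a := div4 _ _ 0 (by ring) (by norm_num)
    have h2 : (b + b) ^ 2 / 4 = b * b := div4 _ _ 0 (by ring) (by norm_num)
    have h3 : (c + c) ^ 2 / 4 = c * c := div4 _ _ 0 (by ring) (by norm_num)
    have h4 : ((a + a) * (b + b) + 1) / 2 = 2 * (a * b) := div2 _ _ 1 (by ring) (by norm_num)
    have h5 : ((a + a) * (c + c) + 1) / 2 = 2 * (a * c) := div2 _ _ 1 (by ring) (by norm_num)
    have h6 : ((b + b) * (c + c) + 1) / 2 = 2 * (b * c) := div2 _ _ 1 (by ring) (by norm_num)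
    have h7 : ((a + a) + (b + b) + (c + c) + 1) ^ 2 / 4 = a * a + b * b + c * c + 2 * (a * b) + 2 * (a * c) + 2 * (b * c) + a + b + c := div4 _ _ 1 (by ring) (by norm_num)
    rw [h1, h2, h3, h4, h5, h6, h7]
    have hb1 : 1 ≤ b := by omega
    linarith
  · have h1 : (a + a) ^ 2 / 4 = a * a := div4 _ _ 0 (by ring) (by norm_num)
    have h2 : (b + b) ^ 2 / 4 = b * b := div4 _ _ 0 (by ring) (by norm_num)
    have h3 : (2 * c + 1) ^ 2 / 4 = c * c + c := div4 _ _ 1 (by ring) (by norm_num)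
    have h4 : ((a + a) * (b + b) + 1) / 2 = 2 * (a * b) := div2 _ _ 1 (by ring) (by norm_num)
    have h5 : ((a + a) * (2 * c + 1) + 1) / 2 = 2 * (a * c) + a := div2 _ _ 1 (by ring) (by norm_num)
    have h6 : ((b + b) * (2 * c + 1) + 1) / 2 = 2 * (b * c) + b := div2 _ _ 1 (by ring) (by norm_num)
    have h7 : ((a + a) + (b + b) + (2 * c + 1) + 1) ^ 2 / 4 = a * a + b * b + c * c + 2 * (a * b) + 2 * (a * c) + 2 * (b * c) + 2 * a + 2 * b + 2 * c + 1 := div4 _ _ 0 (by ring) (by norm_num)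
    rw [h1, h2, h3, h4, h5, h6, h7]
    linarith
  · have h1 : (a + a) ^ 2 / 4 = a * a := div4 _ _ 0 (by ring) (by norm_num)
    have h2 : (2 * b + 1) ^ 2 / 4 = b * b + b := div4 _ _ 1 (by ring) (by norm_num)
    have h3 : (c + c) ^ 2 / 4 = c * c := div4 _ _ 0 (by ring) (by norm_num)
    have h4 : ((a + a) * (2 * b + 1) + 1) / 2 = 2 * (a * b) + a := div2 _ _ 1 (by ring) (by norm_num)
    have h5 : ((a + a) * (c + c) + 1) / 2 = 2 * (a * c) := div2 _ _ 1 (by ring) (by norm_num)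
    have h6 : ((2 * b + 1) * (c + c) + 1) / 2 = 2 * (b * c) + c := div2 _ _ 1 (by ring) (by norm_num)
    have h7 : ((a + a) + (2 * b + 1) + (c + c) + 1) ^ 2 / 4 = a * a + b * b + c * c + 2 * (a * b) + 2 * (a * c) + 2 * (b * c) + 2 * a + 2 * b + 2 * c + 1 := div4 _ _ 0 (by ring) (by norm_num)
    rw [h1, h2, h3, h4, h5, h6, h7]
    linarith
  · have h1 : (a + a) ^ 2 / 4 = a * a := div4 _ _ 0 (by ring) (by norm_num)
    have h2 : (2 * b + 1) ^ 2 / 4 = b * b + b := div4 _ _ 1 (by ring) (by norm_num)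
    have h3 : (2 * c + 1) ^ 2 / 4 = c * c + c := div4 _ _ 1 (by ring) (by norm_num)
    have h4 : ((a + a) * (2 * b + 1) + 1) / 2 = 2 * (a * b) + a := div2 _ _ 1 (by ring) (by norm_num)
    have h5 : ((a + a) * (2 * c + 1) + 1) / 2 = 2 * (a * c) + a := div2 _ _ 1 (by ring) (by norm_num)
    have h6 : ((2 * b + 1) * (2 * c + 1) + 1) / 2 = 2 * (b * c) + b + c + 1 := div2 _ _ 0 (by ring) (by norm_num)
    have h7 : ((a + a) + (2 * b + 1) + (2 * c + 1) + 1) ^ 2 / 4 = a * a + b * b + c * c + 2 * (a * b) + 2 * (a * c) + 2 * (b * c) + 3 * a + 3 * b + 3 * c + 2 := div4 _ _ 1 (by ring) (by norm_num)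
    rw [h1, h2, h3, h4, h5, h6, h7]
    linarith
  · have h1 : (2 * a + 1) ^ 2 / 4 = a * a + a := div4 _ _ 1 (by ring) (by norm_num)
    have h2 : (b + b) ^ 2 / 4 = b * b := div4 _ _ 0 (by ring) (by norm_num)
    have h3 : (c + c) ^ 2 / 4 = c * c := div4 _ _ 0 (by ring) (by norm_num)
    have h4 : ((2 * a + 1) * (b + b) + 1) / 2 = 2 * (a * b) + b := div2 _ _ 1 (by ring) (by norm_num)
    have h5 : ((2 * a + 1) * (c + c) + 1) / 2 = 2 * (a * c) + c := div2 _ _ 1 (by ring) (by norm_num)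
    have h6 : ((b + b) * (c + c) + 1) / 2 = 2 * (b * c) := div2 _ _ 1 (by ring) (by norm_num)
    have h7 : ((2 * a + 1) + (b + b) + (c + c) + 1) ^ 2 / 4 = a * a + b * b + c * c + 2 * (a * b) + 2 * (a * c) + 2 * (b * c) + 2 * a + 2 * b + 2 * c + 1 := div4 _ _ 0 (by ring) (by norm_num)
    rw [h1, h2, h3, h4, h5, h6, h7]
    linarith
  · have h1 : (2 * a + 1) ^ 2 / 4 = a * a + a := div4 _ _ 1 (by ring) (by norm_num)
    have h2 : (b + b) ^ 2 / 4 = b * b := div4 _ _ 0 (by ring) (by norm_num)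
    have h3 : (2 * c + 1) ^ 2 / 4 = c * c + c := div4 _ _ 1 (by ring) (by norm_num)
    have h4 : ((2 * a + 1) * (b + b) + 1) / 2 = 2 * (a * b) + b := div2 _ _ 1 (by ring) (by norm_num)
    have h5 : ((2 * a + 1) * (2 * c + 1) + 1) / 2 = 2 * (a * c) + a + c + 1 := div2 _ _ 0 (by ring) (by norm_num)
    have h6 : ((b + b) * (2 * c + 1) + 1) / 2 = 2 * (b * c) + b := div2 _ _ 1 (by ring) (by norm_num)
    have h7 : ((2 * a + 1) + (b + b) + (2 * c + 1) + 1) ^ 2 / 4 = a * a + b * b + c * c + 2 * (a * b) + 2 * (a * c) + 2 * (b * c) + 3 * a + 3 * b + 3 * c + 2 := div4 _ _ 1 (by ring) (by norm_num)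
    rw [h1, h2, h3, h4, h5, h6, h7]
    linarith
  · have h1 : (2 * a + 1) ^ 2 / 4 = a * a + a := div4 _ _ 1 (by ring) (by norm_num)
    have h2 : (2 * b + 1) ^ 2 / 4 = b * b + b := div4 _ _ 1 (by ring) (by norm_num)
    have h3 : (c + c) ^ 2 / 4 = c * c := div4 _ _ 0 (by ring) (by norm_num)
    have h4 : ((2 * a + 1) * (2 * b + 1) + 1) / 2 = 2 * (a * b) + a + b + 1 := div2 _ _ 0 (by ring) (by norm_num)
    have h5 : ((2 * a + 1) * (c + c) + 1) / 2 = 2 * (a * c) + c := div2 _ _ 1 (by ring) (by norm_num)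
    have h6 : ((2 * b + 1) * (c + c) + 1) / 2 = 2 * (b * c) + c := div2 _ _ 1 (by ring) (by norm_num)
    have h7 : ((2 * a + 1) + (2 * b + 1) + (c + c) + 1) ^ 2 / 4 = a * a + b * b + c * c + 2 * (a * b) + 2 * (a * c) + 2 * (b * c) + 3 * a + 3 * b + 3 * c + 2 := div4 _ _ 1 (by ring) (by norm_num)
    rw [h1, h2, h3, h4, h5, h6, h7]
    linarith
  · have h1 : (2 * a + 1) ^ 2 / 4 = a * a + a := div4 _ _ 1 (by ring) (by norm_num)
    have h2 : (2 * b + 1) ^ 2 / 4 = b * b + b := div4 _ _ 1 (by ring) (by norm_num)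
    have h3 : (2 * c + 1) ^ 2 / 4 = c * c + c := div4 _ _ 1 (by ring) (by norm_num)
    have h4 : ((2 * a + 1) * (2 * b + 1) + 1) / 2 = 2 * (a * b) + a + b + 1 := div2 _ _ 0 (by ring) (by norm_num)
    have h5 : ((2 * a + 1) * (2 * c + 1) + 1) / 2 = 2 * (a * c) + a + c + 1 := div2 _ _ 0 (by ring) (by norm_num)
    have h6 : ((2 * b + 1) * (2 * c + 1) + 1) / 2 = 2 * (b * c) + b + c + 1 := div2 _ _ 0 (by ring) (by norm_num)
    have h7 : ((2 * a + 1) + (2 * b + 1) + (2 * c + 1) + 1) ^ 2 / 4 = a * a + b * b + c * c + 2 * (a * b) + 2 * (a * c) + 2 * (b * c) + 4 * a + 4 * b + 4 * c + 4 := div4 _ _ 0 (by ring) (by norm_num)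
    rw [h1, h2, h3, h4, h5, h6, h7]
    linarith

-- === new material ===

def fmin {m : ℕ} (A : {A : Finset (Fin m) // A.card = 2}) : Fin m :=
  A.1.min' (Finset.card_pos.mp (by rw [A.2]; norm_num))

def fmax {m : ℕ} (A : {A : Finset (Fin m) // A.card = 2}) : Fin m :=
  A.1.max' (Finset.card_pos.mp (by rw [A.2]; norm_num))

lemma fmin_lt_fmax {m : ℕ} (A : {A : Finset (Fin m) // A.card = 2}) :
    ((fmin A : Fin m) : ℕ) < ((fmax A : Fin m) : ℕ) := by
  have : fmin A < fmax A := Finset.min'_lt_max'_of_card A.1 (by rw [A.2]; norm_num)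
  exact this

lemma fmin_mem {m : ℕ} (A : {A : Finset (Fin m) // A.card = 2}) : fmin A ∈ A.1 :=
  Finset.min'_mem _ _

lemma fmax_mem {m : ℕ} (A : {A : Finset (Fin m) // A.card = 2}) : fmax A ∈ A.1 :=
  Finset.max'_mem _ _

lemma pair_repr {m : ℕ} (A : {A : Finset (Fin m) // A.card = 2}) :
    A.1 = {fmin A, fmax A} := by
  have hne : fmin A ≠ fmax A := by
    have := fmin_lt_fmax A
    intro h; rw [h] at this; omega
  have hsub : ({fmin A, fmax A} : Finset (Fin m)) ⊆ A.1 := by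
    intro x hx
    simp only [Finset.mem_insert, Finset.mem_singleton] at hx
    rcases hx with rfl | rfl
    · exact fmin_mem A
    · exact fmax_mem A
  have hcard : A.1.card ≤ ({fmin A, fmax A} : Finset (Fin m)).card := by
    rw [A.2, Finset.card_insert_of_notMem (by simpa using hne), Finset.card_singleton]
  exact (Finset.eq_of_subset_of_card_le hsub hcard).symm

lemma dv_adj {m : ℕ} (u v : {A : Finset (Fin m) // A.card = 2}) (a b c : Fin m)
    (hab : a ≠ b) (hac : a ≠ c) (hbc : (b : ℕ) + 1 = (c : ℕ))
    (hu : u.1 = {a, b}) (hv : v.1 = {a, c}) :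
    (doubleVertexGraph (pathG m)).Adj u v := by
  have hbcne : b ≠ c := by
    intro h; rw [h] at hbc; omega
  rw [doubleVertexGraph, tokenGraph, SimpleGraph.fromRel_adj]
  refine ⟨?_, Or.inl ⟨b, c, ?_, ?_⟩⟩
  · intro h
    have hc : c ∈ u.1 := by
      rw [h, hv]; simp
    rw [hu] at hc
    simp only [Finset.mem_insert, Finset.mem_singleton] at hc
    rcases hc with h' | h'
    · exact hac h'.symm
    · exact hbcne h'.symm
  · rw [pathG, SimpleGraph.fromRel_adj]
    exact ⟨hbcne, Or.inl hbc⟩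
  · rw [hu, hv]
    ext x
    simp only [Finset.mem_symmDiff, Finset.mem_insert, Finset.mem_singleton]
    constructor
    · rintro (⟨h1 | h1, h2⟩ | ⟨h1 | h1, h2⟩)
      · exact absurd (Or.inl h1) h2
      · exact Or.inl h1
      · exact absurd (Or.inl h1) h2
      · exact Or.inr h1
    · rintro (rfl | rfl)
      · refine Or.inl ⟨Or.inr rfl, ?_⟩
        rintro (h | h)
        · exact hab h.symm
        · exact hbcne h
      · refine Or.inr ⟨Or.inr rfl, ?_⟩
        rintro (h | h)
        · exact hac h.symm
        · exact hbcne h.symm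

def toPair {m : ℕ} (A : {A : Finset (Fin m) // A.card = 2}) : ℕ × ℕ :=
  ((fmin A : ℕ), (fmax A : ℕ))

lemma adj_of_adj2 {m : ℕ} (u v : {A : Finset (Fin m) // A.card = 2})
    (h : Adj2 (toPair u) (toPair v)) :
    (doubleVertexGraph (pathG m)).Adj u v := by
  have hu := pair_repr u
  have hv := pair_repr v
  have hu' := fmin_lt_fmax u
  have hv' := fmin_lt_fmax v
  simp only [Adj2, toPair] at h
  rcases h with ⟨h1, h2 | h2⟩ | ⟨h1, h2 | h2⟩
  · -- same min, (fmax u) = (fmax v) + 1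
    have hmin : fmin v = fmin u := Fin.ext h1.symm
    exact (dv_adj v u (fmin v) (fmax v) (fmax u)
      (by intro h; rw [h] at hv'; omega)
      (by intro h; rw [hmin] at h; rw [h] at hu'; omega)
      (by omega) hv (hmin ▸ hu)).symm
  · have hmin : fmin u = fmin v := Fin.ext h1
    exact dv_adj u v (fmin u) (fmax u) (fmax v)
      (by intro h; rw [h] at hu'; omega)
      (by intro h; rw [hmin] at h; rw [h] at hv'; omega)
      (by omega) hu (hmin ▸ hv)
  · -- same max, (fmin u) = (fmin v) + 1
    have hmax : fmax v = fmax u := Fin.ext h1.symm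
    exact (dv_adj v u (fmax v) (fmin v) (fmin u)
      (by intro h; rw [← h] at hv'; omega)
      (by intro h; rw [hmax] at h; rw [← h] at hu'; omega)
      (by omega) (hv.trans (Finset.pair_comm _ _)) ((hmax ▸ hu).trans (Finset.pair_comm _ _))).symm
  · have hmax : fmax u = fmax v := Fin.ext h1
    exact dv_adj u v (fmax u) (fmin u) (fmin v)
      (by intro h; rw [← h] at hu'; omega)
      (by intro h; rw [hmax] at h; rw [← h] at hv'; omega)
      (by omega) (hu.trans (Finset.pair_comm _ _)) ((hmax ▸ hv).trans (Finset.pair_comm _ _))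

lemma part1_nat (m i : ℕ) (him : i < m) (J : Finset (ℕ × ℕ))
    (hJ : ∀ x ∈ J, x.1 < x.2 ∧ x.2 < m ∧ x.1 ≠ i ∧ x.2 ≠ i)
    (hind : ∀ x ∈ J, ∀ y ∈ J, ¬ Adj2 x y) : J.card ≤ (m - 1) ^ 2 / 4 := by
  have hJa : (J.filter fun x => x.2 < i).card ≤ (i - 0) ^ 2 / 4 := by
    apply tri_bound _ 0 i
    · intro x hx
      rw [Finset.mem_filter] at hx
      have := hJ x hx.1
      exact ⟨Nat.zero_le _, this.1, hx.2⟩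
    · intro x hx y hy
      exact hind x (Finset.mem_filter.mp hx).1 y (Finset.mem_filter.mp hy).1
  have hJb : ((J.filter fun x => ¬ x.2 < i).filter fun x => i < x.1).card ≤
      (m - (i + 1)) ^ 2 / 4 := by
    apply tri_bound _ (i + 1) m
    · intro x hx
      simp only [Finset.mem_filter] at hx
      have := hJ x hx.1.1
      exact ⟨hx.2, this.1, this.2.1⟩
    · intro x hx y hy
      exact hind x (Finset.mem_filter.mp (Finset.mem_filter.mp hx).1).1
        y (Finset.mem_filter.mp (Finset.mem_filter.mp hy).1).1
  have hJc : ((J.filter fun x => ¬ x.2 < i).filter fun x => ¬ i < x.1).card ≤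
      ((i - 0) * (m - (i + 1)) + 1) / 2 := by
    apply rect_bound _ 0 i (i + 1) m
    · intro x hx
      simp only [Finset.mem_filter] at hx
      have := hJ x hx.1.1
      refine ⟨Nat.zero_le _, ?_, ?_, this.2.1⟩ <;> omega
    · intro x hx y hy
      exact hind x (Finset.mem_filter.mp (Finset.mem_filter.mp hx).1).1
        y (Finset.mem_filter.mp (Finset.mem_filter.mp hy).1).1
  have hs1 := Finset.card_filter_add_card_filter_not (s := J) (p := fun x => x.2 < i)
  have hs2 := Finset.card_filter_add_card_filter_not
    (s := J.filter fun x => ¬ x.2 < i) (p := fun x => i < x.1)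
  have harith := arith1 (i - 0) (m - (i + 1))
  have hsum : (i - 0) + (m - (i + 1)) = m - 1 := by omega
  rw [hsum] at harith
  linarith

lemma part2_nat (m i j : ℕ) (hij : i + 2 ≤ j) (hjm : j < m) (J : Finset (ℕ × ℕ))
    (hJ : ∀ x ∈ J, x.1 < x.2 ∧ x.2 < m ∧ x.1 ≠ i ∧ x.2 ≠ i ∧ x.1 ≠ j ∧ x.2 ≠ j)
    (hind : ∀ x ∈ J, ∀ y ∈ J, ¬ Adj2 x y) : J.card + 1 ≤ (m - 1) ^ 2 / 4 := by
  classical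
  set J1 := J.filter fun x => x.2 < i with hJ1
  set Jr := J.filter (fun x => ¬ x.2 < i) with hJr
  set J23 := Jr.filter fun x => x.2 < j with hJ23
  set J456 := Jr.filter (fun x => ¬ x.2 < j) with hJ456
  set J2 := J23.filter fun x => x.1 < i with hJ2def
  set J3 := J23.filter (fun x => ¬ x.1 < i) with hJ3def
  set J4 := J456.filter fun x => x.1 < i with hJ4def
  set J56 := J456.filter (fun x => ¬ x.1 < i) with hJ56def
  set J5 := J56.filter fun x => x.1 < j with hJ5def
  set J6 := J56.filter (fun x => ¬ x.1 < j) with hJ6def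
  have mem1 : ∀ x ∈ J1, x ∈ J := fun x hx => (Finset.mem_filter.mp hx).1
  have memr : ∀ x ∈ Jr, x ∈ J := fun x hx => (Finset.mem_filter.mp hx).1
  have mem23 : ∀ x ∈ J23, x ∈ J := fun x hx => memr x (Finset.mem_filter.mp hx).1
  have mem456 : ∀ x ∈ J456, x ∈ J := fun x hx => memr x (Finset.mem_filter.mp hx).1
  have mem2 : ∀ x ∈ J2, x ∈ J := fun x hx => mem23 x (Finset.mem_filter.mp hx).1
  have mem3 : ∀ x ∈ J3, x ∈ J := fun x hx => mem23 x (Finset.mem_filter.mp hx).1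
  have mem4 : ∀ x ∈ J4, x ∈ J := fun x hx => mem456 x (Finset.mem_filter.mp hx).1
  have mem56 : ∀ x ∈ J56, x ∈ J := fun x hx => mem456 x (Finset.mem_filter.mp hx).1
  have mem5 : ∀ x ∈ J5, x ∈ J := fun x hx => mem56 x (Finset.mem_filter.mp hx).1
  have mem6 : ∀ x ∈ J6, x ∈ J := fun x hx => mem56 x (Finset.mem_filter.mp hx).1
  -- bounds
  have hb1 : J1.card ≤ (i - 0) ^ 2 / 4 := by
    apply tri_bound _ 0 i
    · intro x hx
      have h := hJ x (mem1 x hx)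
      have := (Finset.mem_filter.mp hx).2
      exact ⟨Nat.zero_le _, h.1, this⟩
    · exact fun x hx y hy => hind x (mem1 x hx) y (mem1 y hy)
  have hb2 : J2.card ≤ ((i - 0) * (j - (i + 1)) + 1) / 2 := by
    apply rect_bound _ 0 i (i + 1) j
    · intro x hx
      have h := hJ x (mem2 x hx)
      have h1 := (Finset.mem_filter.mp hx).2
      have h2 := (Finset.mem_filter.mp (Finset.mem_filter.mp hx).1).2
      have h3 := (Finset.mem_filter.mp (Finset.mem_filter.mp (Finset.mem_filter.mp hx).1).1).2
      refine ⟨Nat.zero_le _, h1, by omega, h2⟩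
    · exact fun x hx y hy => hind x (mem2 x hx) y (mem2 y hy)
  have hb3 : J3.card ≤ (j - (i + 1)) ^ 2 / 4 := by
    apply tri_bound _ (i + 1) j
    · intro x hx
      have h := hJ x (mem3 x hx)
      have h1 := (Finset.mem_filter.mp hx).2
      have h2 := (Finset.mem_filter.mp (Finset.mem_filter.mp hx).1).2
      exact ⟨by omega, h.1, h2⟩
    · exact fun x hx y hy => hind x (mem3 x hx) y (mem3 y hy)
  have hb4 : J4.card ≤ ((i - 0) * (m - (j + 1)) + 1) / 2 := by
    apply rect_bound _ 0 i (j + 1) m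
    · intro x hx
      have h := hJ x (mem4 x hx)
      have h1 := (Finset.mem_filter.mp hx).2
      have h2 := (Finset.mem_filter.mp (Finset.mem_filter.mp hx).1).2
      refine ⟨Nat.zero_le _, h1, by omega, h.2.1⟩
    · exact fun x hx y hy => hind x (mem4 x hx) y (mem4 y hy)
  have hb5 : J5.card ≤ ((j - (i + 1)) * (m - (j + 1)) + 1) / 2 := by
    apply rect_bound _ (i + 1) j (j + 1) m
    · intro x hx
      have h := hJ x (mem5 x hx)
      have h1 := (Finset.mem_filter.mp hx).2
      have h2 := (Finset.mem_filter.mp (Finset.mem_filter.mp hx).1).2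
      have h3 := (Finset.mem_filter.mp (Finset.mem_filter.mp (Finset.mem_filter.mp hx).1).1).2
      refine ⟨by omega, h1, by omega, h.2.1⟩
    · exact fun x hx y hy => hind x (mem5 x hx) y (mem5 y hy)
  have hb6 : J6.card ≤ (m - (j + 1)) ^ 2 / 4 := by
    apply tri_bound _ (j + 1) m
    · intro x hx
      have h := hJ x (mem6 x hx)
      have h1 := (Finset.mem_filter.mp hx).2
      exact ⟨by omega, h.1, h.2.1⟩
    · exact fun x hx y hy => hind x (mem6 x hx) y (mem6 y hy)
  -- partitions
  have hs1 : J1.card + Jr.card = J.card :=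
    Finset.card_filter_add_card_filter_not (s := J) (p := fun x => x.2 < i)
  have hs2 : J23.card + J456.card = Jr.card :=
    Finset.card_filter_add_card_filter_not (s := Jr) (p := fun x => x.2 < j)
  have hs3 : J2.card + J3.card = J23.card :=
    Finset.card_filter_add_card_filter_not (s := J23) (p := fun x => x.1 < i)
  have hs4 : J4.card + J56.card = J456.card :=
    Finset.card_filter_add_card_filter_not (s := J456) (p := fun x => x.1 < i)
  have hs5 : J5.card + J6.card = J56.card :=
    Finset.card_filter_add_card_filter_not (s := J56) (p := fun x => x.1 < j)
  have harith := arith2 (i - 0) (j - (i + 1)) (m - (j + 1)) (by omega)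
  have hsum : (i - 0) + (j - (i + 1)) + (m - (j + 1)) + 1 = m - 1 := by omega
  rw [hsum] at harith
  linarith

/-- For `m ≥ 4` and a nonempty `S ⊆ {1,…,m}` with no two consecutive integers,
`α(T_m − ∪_{i∈S} R_i) ≤ ⌊(m−1)²/4⌋`, with strict inequality when `|S| ≥ 2`. -/
theorem indepNum_Tm_delete_RS (m : ℕ) (hm : 4 ≤ m) (S : Finset (Fin m))
    (hS : S.Nonempty) (hcons : ∀ i ∈ S, ∀ j ∈ S, (i : ℕ) + 1 ≠ (j : ℕ)) :
    indepNum (SimpleGraph.induce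
        {A : {A : Finset (Fin m) // A.card = 2} | ∀ i ∈ S, i ∉ A.1}
        (doubleVertexGraph (pathG m))) ≤ (m - 1) ^ 2 / 4 ∧
    (2 ≤ S.card →
      indepNum (SimpleGraph.induce
        {A : {A : Finset (Fin m) // A.card = 2} | ∀ i ∈ S, i ∉ A.1}
        (doubleVertexGraph (pathG m))) < (m - 1) ^ 2 / 4) := by
  classical
  set Vset := {A : {A : Finset (Fin m) // A.card = 2} | ∀ i ∈ S, i ∉ A.1} with hVset
  have step : ∀ s : Finset ↥Vset,
      (∀ a ∈ s, ∀ b ∈ s, ¬ (SimpleGraph.induce Vset (doubleVertexGraph (pathG m))).Adj a b) →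
      ∃ J : Finset (ℕ × ℕ), J.card = s.card ∧
        (∀ x ∈ J, x.1 < x.2 ∧ x.2 < m ∧ ∀ i ∈ S, x.1 ≠ (i : ℕ) ∧ x.2 ≠ (i : ℕ)) ∧
        (∀ x ∈ J, ∀ y ∈ J, ¬ Adj2 x y) := by
    intro s hindep
    refine ⟨s.image (fun v => toPair v.1), ?_, ?_, ?_⟩
    · apply Finset.card_image_of_injOn
      intro u _ v _ h
      simp only [toPair, Prod.mk.injEq] at h
      have h1 : fmin u.1 = fmin v.1 := Fin.ext h.1
      have h2 : fmax u.1 = fmax v.1 := Fin.ext h.2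
      have : u.1.1 = v.1.1 := by rw [pair_repr u.1, pair_repr v.1, h1, h2]
      exact Subtype.ext (Subtype.ext this)
    · intro x hx
      simp only [Finset.mem_image] at hx
      obtain ⟨v, hv, rfl⟩ := hx
      refine ⟨fmin_lt_fmax v.1, (fmax v.1).isLt, ?_⟩
      intro i hi
      have hnotin : (i : Fin m) ∉ v.1.1 := v.2 i hi
      constructor
      · intro h
        exact hnotin (Fin.ext h.symm ▸ fmin_mem v.1)
      · intro h
        exact hnotin (Fin.ext h.symm ▸ fmax_mem v.1)
    · intro x hx y hy hadj
      simp only [Finset.mem_image] at hx hy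
      obtain ⟨u, hu, rfl⟩ := hx
      obtain ⟨v, hv, rfl⟩ := hy
      exact hindep u hu v hv (adj_of_adj2 u.1 v.1 hadj)
  have hne : {n | ∃ s : Finset ↥Vset, s.card = n ∧
      ∀ a ∈ s, ∀ b ∈ s, ¬ (SimpleGraph.induce Vset (doubleVertexGraph (pathG m))).Adj a b}.Nonempty :=
    ⟨0, ∅, by simp⟩
  constructor
  · apply csSup_le hne
    rintro n ⟨s, rfl, hindep⟩
    obtain ⟨J, hcard, hmem, hind⟩ := step s hindep
    obtain ⟨i0, hi0⟩ := hS
    rw [← hcard]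
    apply part1_nat m (i0 : ℕ) i0.isLt J _ hind
    intro x hx
    obtain ⟨h1, h2, h3⟩ := hmem x hx
    exact ⟨h1, h2, (h3 i0 hi0).1, (h3 i0 hi0).2⟩
  · intro h2
    obtain ⟨a, ha, b, hb, hab⟩ := Finset.one_lt_card.mp h2
    have hvab : (a : ℕ) ≠ (b : ℕ) := fun h => hab (Fin.ext h)
    have key : ∀ (i j : Fin m), i ∈ S → j ∈ S → (i : ℕ) < (j : ℕ) →
        indepNum (SimpleGraph.induce Vset (doubleVertexGraph (pathG m))) ≤ (m - 1) ^ 2 / 4 - 1 := by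
      intro i j hi hj hlt
      have hij : (i : ℕ) + 2 ≤ (j : ℕ) := by
        have := hcons i hi j hj
        omega
      apply csSup_le hne
      rintro n ⟨s, rfl, hindep⟩
      obtain ⟨J, hcard, hmem, hind⟩ := step s hindep
      have := part2_nat m (i : ℕ) (j : ℕ) hij j.isLt J
        (fun x hx => by
          obtain ⟨h1, h2, h3⟩ := hmem x hx
          exact ⟨h1, h2, (h3 i hi).1, (h3 i hi).2, (h3 j hj).1, (h3 j hj).2⟩)
        hind
      omega
    have hB : 2 ≤ (m - 1) ^ 2 / 4 := by
      have h9 : 3 * 3 ≤ (m - 1) * (m - 1) := Nat.mul_le_mul (by omega) (by omega)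
      have hsq : (m - 1) ^ 2 = (m - 1) * (m - 1) := sq (m - 1)
      omega
    have hle : indepNum (SimpleGraph.induce Vset (doubleVertexGraph (pathG m))) ≤
        (m - 1) ^ 2 / 4 - 1 := by
      rcases Nat.lt_or_ge (a : ℕ) (b : ℕ) with h | h
      · exact key a b ha hb h
      · exact key b a hb ha (by omega)
    omega
end

section
/- For every integer m ≥ 3, the independence number of the double vertex graph of the cycle C_m equals ⌊(m/2)·⌊m/2⌋⌋. -/
namespace TCyc
variable {m : ℕ}

lemma indepNum_eq {W : Type*} (G : SimpleGraph W) (n : ℕ)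
    (hex : ∃ s : Finset W, s.card = n ∧ ∀ a ∈ s, ∀ b ∈ s, ¬ G.Adj a b)
    (hub : ∀ s : Finset W, (∀ a ∈ s, ∀ b ∈ s, ¬ G.Adj a b) → s.card ≤ n) :
    indepNum G = n := by
  apply le_antisymm
  · apply csSup_le ⟨n, hex⟩
    rintro k ⟨s, rfl, hs⟩
    exact hub s hs
  · exact le_csSup ⟨n, by rintro k ⟨s, rfl, hs⟩; exact hub s hs⟩ hex

lemma pair_eq {α : Type*} [DecidableEq α] {a b c d : α} (hab : a ≠ b)
    (h : ({a, b} : Finset α) = {c, d}) : (a = c ∧ b = d) ∨ (a = d ∧ b = c) := by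
  have ha : a = c ∨ a = d := by
    have : a ∈ ({c, d} : Finset α) := h ▸ (by simp)
    simpa using this
  have hb : b = c ∨ b = d := by
    have : b ∈ ({c, d} : Finset α) := h ▸ (by simp)
    simpa using this
  rcases ha with h1 | h1 <;> rcases hb with h2 | h2
  · exact absurd (h1.trans h2.symm) hab
  · exact Or.inl ⟨h1, h2⟩
  · exact Or.inr ⟨h1, h2⟩
  · exact absurd (h1.trans h2.symm) hab

lemma card_pair' {α : Type*} [DecidableEq α] {a b : α} (hab : a ≠ b) :
    ({a, b} : Finset α).card = 2 := by
  rw [Finset.card_insert_of_notMem (by simpa using hab), Finset.card_singleton]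

lemma token_adj_intro {W : Type*} [DecidableEq W] {G : SimpleGraph W}
    {A B : {A : Finset W // A.card = 2}} {w y z : W}
    (hA : A.1 = {w, y}) (hB : B.1 = {w, z}) (hwy : w ≠ y) (hwz : w ≠ z)
    (hadj : G.Adj y z) : (doubleVertexGraph G).Adj A B := by
  have hyz : y ≠ z := G.ne_of_adj hadj
  rw [doubleVertexGraph, tokenGraph, SimpleGraph.fromRel_adj]
  constructor
  · intro hAB
    have hv : A.1 = B.1 := congrArg Subtype.val hAB
    rw [hA, hB] at hv
    rcases pair_eq hwy hv with ⟨_, h⟩ | ⟨h, _⟩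
    · exact hyz h
    · exact hwz h
  · refine Or.inl ⟨y, z, hadj, ?_⟩
    rw [hA, hB]
    ext x
    simp only [Finset.mem_symmDiff, Finset.mem_insert, Finset.mem_singleton]
    constructor
    · rintro (⟨hx, hnx⟩ | ⟨hx, hnx⟩)
      · rcases hx with rfl | rfl
        · exact absurd (Or.inl rfl) hnx
        · exact Or.inl rfl
      · rcases hx with rfl | rfl
        · exact absurd (Or.inl rfl) hnx
        · exact Or.inr rfl
    · rintro (rfl | rfl)
      · exact Or.inl ⟨Or.inr rfl, fun h => h.elim (fun h => hwy h.symm) (fun h => hyz h)⟩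
      · exact Or.inr ⟨Or.inr rfl, fun h => h.elim (fun h => hwz h.symm) (fun h => hyz h.symm)⟩

lemma token_adj_elim {W : Type*} [DecidableEq W] {G : SimpleGraph W}
    {A B : {A : Finset W // A.card = 2}} (h : (doubleVertexGraph G).Adj A B) :
    ∃ w y z : W, G.Adj y z ∧ w ≠ y ∧ w ≠ z ∧ A.1 = {w, y} ∧ B.1 = {w, z} := by
  rw [doubleVertexGraph, tokenGraph, SimpleGraph.fromRel_adj] at h
  obtain ⟨hne, h⟩ := h
  obtain ⟨a, b, hab, hsd⟩ : ∃ a b, G.Adj a b ∧ symmDiff A.1 B.1 = {a, b} := by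
    rcases h with ⟨a, b, hab, hsd⟩ | ⟨a, b, hab, hsd⟩
    · exact ⟨a, b, hab, hsd⟩
    · exact ⟨a, b, hab, by rw [symmDiff_comm]; exact hsd⟩
  have hab' : a ≠ b := G.ne_of_adj hab
  have hsd' : A.1 \ B.1 ∪ B.1 \ A.1 = {a, b} := by
    rw [symmDiff_def, Finset.sup_eq_union] at hsd; exact hsd
  have hdisj : Disjoint (A.1 \ B.1) (B.1 \ A.1) := disjoint_sdiff_sdiff
  have hcard : (A.1 \ B.1).card + (B.1 \ A.1).card = 2 := by
    rw [← Finset.card_union_of_disjoint hdisj, hsd', card_pair' hab']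
  have h1 : (A.1 \ B.1).card + (A.1 ∩ B.1).card = 2 := by
    rw [Finset.card_sdiff_add_card_inter, A.2]
  have h2 : (B.1 \ A.1).card + (B.1 ∩ A.1).card = 2 := by
    rw [Finset.card_sdiff_add_card_inter, B.2]
  have hint : (A.1 ∩ B.1).card = (B.1 ∩ A.1).card := by rw [Finset.inter_comm]
  have hAd : (A.1 \ B.1).card = 1 := by omega
  have hBd : (B.1 \ A.1).card = 1 := by omega
  have hI : (A.1 ∩ B.1).card = 1 := by omega
  obtain ⟨w, hw⟩ := Finset.card_eq_one.mp hI
  obtain ⟨p, hp⟩ := Finset.card_eq_one.mp hAd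
  obtain ⟨q, hq⟩ := Finset.card_eq_one.mp hBd
  have hpm : p ∈ A.1 ∧ p ∉ B.1 := Finset.mem_sdiff.mp (hp ▸ Finset.mem_singleton_self p)
  have hqm : q ∈ B.1 ∧ q ∉ A.1 := Finset.mem_sdiff.mp (hq ▸ Finset.mem_singleton_self q)
  have hwm : w ∈ A.1 ∧ w ∈ B.1 := Finset.mem_inter.mp (hw ▸ Finset.mem_singleton_self w)
  have hpq : p ≠ q := fun h => hpm.2 (h ▸ hqm.1)
  have hwp : w ≠ p := fun h => hpm.2 (h ▸ hwm.2)
  have hwq : w ≠ q := fun h => hqm.2 (h ▸ hwm.1)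
  have hAeq : A.1 = {w, p} := by
    have := Finset.sdiff_union_inter A.1 B.1
    rw [hp, hw] at this
    rw [← this]
    ext x; simp; tauto
  have hBeq : B.1 = {w, q} := by
    have := Finset.sdiff_union_inter B.1 A.1
    rw [hq, Finset.inter_comm, hw] at this
    rw [← this]
    ext x; simp; tauto
  have hpq' : ({p, q} : Finset W) = {a, b} := by rw [hp, hq] at hsd'; simpa using hsd'
  rcases pair_eq hpq hpq' with ⟨h1, h2⟩ | ⟨h1, h2⟩
  · exact ⟨w, a, b, hab, h1 ▸ hwp, h2 ▸ hwq, h1 ▸ hAeq, h2 ▸ hBeq⟩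
  · exact ⟨w, b, a, hab.symm, h1 ▸ hwp, h2 ▸ hwq, h1 ▸ hAeq, h2 ▸ hBeq⟩


def fm [NeZero m] (a : ℕ) : Fin m := ⟨a % m, Nat.mod_lt _ (Nat.pos_of_ne_zero (NeZero.ne m))⟩

lemma fm_val [NeZero m] (a : ℕ) : (fm (m := m) a).val = a % m := rfl

def gap (x y : Fin m) : ℕ := if x.val ≤ y.val then y.val - x.val else y.val + m - x.val

def gm (x y : Fin m) : ℕ := min (gap x y) (gap y x)

lemma gm_comm (x y : Fin m) : gm x y = gm y x := min_comm _ _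

lemma val_succ [NeZero m] (hm : 3 ≤ m) (a : Fin m) :
    ((a + 1 : Fin m)).val = if a.val + 1 = m then 0 else a.val + 1 := by
  have h1 : (1 : Fin m).val = 1 := by
    rw [Fin.val_one']; exact Nat.mod_eq_of_lt (by omega)
  rw [Fin.add_def, h1]
  split_ifs with h
  · simp [h]
  · exact Nat.mod_eq_of_lt (by have := a.isLt; omega)

lemma adj_succ [NeZero m] (hm : 3 ≤ m) (i : Fin m) : (cycleG m).Adj i (i + 1) := by
  have hv := val_succ hm i
  have hlt := i.isLt
  rw [cycleG, SimpleGraph.fromRel_adj]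
  constructor
  · intro h
    have : i.val = (i + 1 : Fin m).val := congrArg Fin.val h
    rw [hv] at this
    split_ifs at this <;> omega
  · by_cases h : i.val + 1 = m
    · right; right; constructor
      · rw [hv]; simp [h]
      · omega
    · left; left; rw [hv]; simp [h]

lemma cycle_adj_vals (hm : 3 ≤ m) {y z : Fin m} (h : (cycleG m).Adj y z) :
    y.val ≠ z.val ∧ (y.val + 1 = z.val ∨ z.val + 1 = y.val ∨
      (y.val = 0 ∧ z.val = m - 1) ∨ (z.val = 0 ∧ y.val = m - 1)) := by
  rw [cycleG, SimpleGraph.fromRel_adj] at h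
  obtain ⟨hne, h⟩ := h
  refine ⟨fun hv => hne (Fin.ext hv), by tauto⟩

lemma gm_adj (hm : 3 ≤ m) {w y z : Fin m} (hwy : w ≠ y) (hwz : w ≠ z)
    (hadj : (cycleG m).Adj y z) :
    gm w z = gm w y + 1 ∨ gm w y = gm w z + 1 ∨
      (m % 2 = 1 ∧ gm w y = m / 2 ∧ gm w z = m / 2) := by
  obtain ⟨hyz, hrel⟩ := cycle_adj_vals hm hadj
  have hw := w.isLt; have hy := y.isLt; have hz := z.isLt
  have hwy' : w.val ≠ y.val := fun h => hwy (Fin.ext h)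
  have hwz' : w.val ≠ z.val := fun h => hwz (Fin.ext h)
  unfold gm gap
  split_ifs <;> omega

lemma gm_shift [NeZero m] (hm : 3 ≤ m) (x : Fin m) {d : ℕ} (hd1 : 1 ≤ d) (hd2 : d ≤ m / 2) :
    gm x (fm (x.val + d)) = d ∧ x ≠ fm (x.val + d) := by
  have hx := x.isLt
  have hmod : (x.val + d) % m = if x.val + d < m then x.val + d else x.val + d - m := by
    split_ifs with h
    · exact Nat.mod_eq_of_lt h
    · rw [Nat.mod_eq_sub_mod (le_of_not_gt h)]
      exact Nat.mod_eq_of_lt (by omega)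
  constructor
  · unfold gm gap
    rw [fm_val, hmod]
    split_ifs <;> omega
  · intro h
    have := congrArg Fin.val h
    rw [fm_val, hmod] at this
    split_ifs at this <;> omega

lemma gm_pair_eq {α : Prop} (hm : 3 ≤ m) : True := trivial

/-- if two pairs are equal as finsets, their gm agree -/
lemma gm_of_pair {x y w u : Fin m} (hxy : x ≠ y)
    (h : ({x, y} : Finset (Fin m)) = {w, u}) : gm w u = gm x y := by
  rcases pair_eq hxy h with ⟨rfl, rfl⟩ | ⟨rfl, rfl⟩
  · rfl
  · exact gm_comm _ _

lemma fm_mul_cancel [NeZero m] (hm : 3 ≤ m) {t : ℕ} (hmt : m = 2 * t + 1) {a b : ℕ}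
    (ha : a < m) (hb : b < m) (h : fm (m := m) (a * t) = fm (b * t)) : a = b := by
  have hco : Nat.gcd m t = 1 := by
    have h1 : Nat.Coprime (1 + 2 * t) t := by
      rw [Nat.coprime_add_mul_right_left]
      exact Nat.coprime_one_left t
    have : m = 1 + 2 * t := by omega
    rw [this]; exact h1
  have hmodeq : a * t ≡ b * t [MOD m] := by
    have := congrArg Fin.val h
    simpa [fm_val, Nat.ModEq] using this
  have h2 : a ≡ b [MOD m] := Nat.ModEq.cancel_right_of_coprime hco hmodeq
  have h3 : a % m = b % m := h2
  rwa [Nat.mod_eq_of_lt ha, Nat.mod_eq_of_lt hb] at h3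


lemma cycle_indep_card {m : ℕ} (hm : 3 ≤ m) (D : Finset (Fin m))
    (hD : ∀ a ∈ D, ∀ b ∈ D, ¬ (cycleG m).Adj a b) : D.card ≤ m / 2 := by
  haveI : NeZero m := ⟨by omega⟩
  have hdisj : Disjoint D (D.image (· + 1)) := by
    rw [Finset.disjoint_right]
    rintro x hx hxD
    obtain ⟨y, hy, rfl⟩ := Finset.mem_image.mp hx
    exact hD y hy (y + 1) hxD (adj_succ hm y)
  have hinj : Set.InjOn (· + (1 : Fin m)) D := by
    intro a _ b _ h
    have ha := val_succ hm a; have hb := val_succ hm b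
    have : ((a + 1 : Fin m)).val = ((b + 1 : Fin m)).val := congrArg Fin.val h
    rw [ha, hb] at this
    have h1 := a.isLt; have h2 := b.isLt
    apply Fin.ext
    split_ifs at this <;> omega
  have hcard : (D ∪ D.image (· + 1)).card = D.card + D.card := by
    rw [Finset.card_union_of_disjoint hdisj, Finset.card_image_of_injOn hinj]
  have hle : (D ∪ D.image (· + 1)).card ≤ m := by
    have := Finset.card_le_univ (D ∪ D.image (· + 1))
    simpa using this
  omega

lemma upper_bound {m : ℕ} (hm : 3 ≤ m) (s : Finset {A : Finset (Fin m) // A.card = 2})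
    (hs : ∀ a ∈ s, ∀ b ∈ s, ¬ (doubleVertexGraph (cycleG m)).Adj a b) :
    s.card ≤ m * (m / 2) / 2 := by
  haveI : NeZero m := ⟨by omega⟩
  rw [Nat.le_div_iff_mul_le (by norm_num : 0 < 2)]
  have key : ∀ i : Fin m, (s.filter (fun A => i ∈ A.1)).card ≤ m / 2 := by
    intro i
    classical
    set oth : {A : Finset (Fin m) // A.card = 2} → Fin m :=
      fun A => if h : (A.1.erase i).Nonempty then (A.1.erase i).min' h else i with hoth
    have hoth_spec : ∀ A ∈ s.filter (fun A => i ∈ A.1), A.1 = {i, oth A} ∧ oth A ≠ i := by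
      intro A hA
      rw [Finset.mem_filter] at hA
      obtain ⟨hAs, hiA⟩ := hA
      have hne : (A.1.erase i).Nonempty := by
        rw [← Finset.card_pos, Finset.card_erase_of_mem hiA, A.2]; norm_num
      have hmem : oth A ∈ A.1.erase i := by
        rw [hoth]; simp only [dif_pos hne]; exact Finset.min'_mem _ _
      have h1 : oth A ≠ i := (Finset.mem_erase.mp hmem).1
      have h2 : oth A ∈ A.1 := (Finset.mem_erase.mp hmem).2
      refine ⟨(Finset.eq_of_subset_of_card_le ?_ ?_).symm, h1⟩
      · intro x hx
        rcases Finset.mem_insert.mp hx with rfl | hx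
        · exact hiA
        · exact (Finset.mem_singleton.mp hx) ▸ h2
      · rw [A.2, card_pair' (Ne.symm h1)]
    have hinj : Set.InjOn oth (s.filter (fun A => i ∈ A.1)) := by
      intro A hA B hB h
      have hA' := hoth_spec A hA
      have hB' := hoth_spec B hB
      apply Subtype.ext
      rw [hA'.1, hB'.1, h]
    rw [← Finset.card_image_of_injOn hinj]
    apply cycle_indep_card hm
    intro a ha b hb hadj
    obtain ⟨A, hA, rfl⟩ := Finset.mem_image.mp ha
    obtain ⟨B, hB, rfl⟩ := Finset.mem_image.mp hb
    have hA' := hoth_spec A hA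
    have hB' := hoth_spec B hB
    have hAs : A ∈ s := (Finset.mem_filter.mp hA).1
    have hBs : B ∈ s := (Finset.mem_filter.mp hB).1
    exact hs A hAs B hBs
      (token_adj_intro hA'.1 hB'.1 (Ne.symm hA'.2) (Ne.symm hB'.2) hadj)
  have count : ∑ i : Fin m, (s.filter (fun A => i ∈ A.1)).card = s.card * 2 := by
    classical
    have e1 : ∀ i : Fin m, (s.filter (fun A => i ∈ A.1)).card
        = ∑ A ∈ s, if i ∈ A.1 then 1 else 0 := fun i => Finset.card_filter _ _
    rw [Finset.sum_congr rfl (fun i _ => e1 i), Finset.sum_comm]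
    have e2 : ∀ A : {A : Finset (Fin m) // A.card = 2},
        (∑ i : Fin m, if i ∈ A.1 then 1 else 0) = 2 := by
      intro A
      rw [← Finset.card_filter, Finset.filter_univ_mem, A.2]
    rw [Finset.sum_congr rfl (fun A _ => e2 A), Finset.sum_const, smul_eq_mul, mul_comm]
  calc s.card * 2 = ∑ i : Fin m, (s.filter (fun A => i ∈ A.1)).card := count.symm
    _ ≤ ∑ _i : Fin m, m / 2 := Finset.sum_le_sum (fun i _ => key i)
    _ = m * (m / 2) := by rw [Finset.sum_const, Finset.card_univ, Fintype.card_fin, smul_eq_mul]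

def junk (hm : 3 ≤ m) : {A : Finset (Fin m) // A.card = 2} :=
  ⟨{⟨0, by omega⟩, ⟨1, by omega⟩}, card_pair' (by simp [Fin.ext_iff])⟩

def mkP (hm : 3 ≤ m) (x y : Fin m) : {A : Finset (Fin m) // A.card = 2} :=
  if h : x = y then junk hm else ⟨{x, y}, card_pair' h⟩

lemma mkP_val (hm : 3 ≤ m) {x y : Fin m} (h : x ≠ y) : (mkP hm x y).1 = {x, y} := by
  rw [mkP, dif_neg h]

lemma card_range_filter_odd (n : ℕ) :
    ((Finset.range n).filter (fun d => d % 2 = 1)).card = n / 2 := by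
  induction n with
  | zero => simp
  | succ n ih =>
    rw [Finset.range_add_one, Finset.filter_insert]
    split_ifs with h
    · rw [Finset.card_insert_of_notMem (by simp), ih]; omega
    · rw [ih]; omega

lemma card_range_filter_even (n : ℕ) :
    ((Finset.range n).filter (fun d => d % 2 = 0)).card = (n + 1) / 2 := by
  induction n with
  | zero => simp
  | succ n ih =>
    rw [Finset.range_add_one, Finset.filter_insert]
    split_ifs with h
    · rw [Finset.card_insert_of_notMem (by simp), ih]; omega
    · rw [ih]; omega

lemma fm_add [NeZero m] (a b : ℕ) : fm (m := m) ((fm (m := m) a).val + b) = fm (a + b) := by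
  apply Fin.ext
  simp only [fm_val]
  rw [Nat.mod_add_mod]

lemma lower_even [NeZero m] (hm : 3 ≤ m) (hpar : m % 2 = 0) :
    ∃ s : Finset {A : Finset (Fin m) // A.card = 2}, s.card = m * (m / 2) / 2 ∧
      ∀ a ∈ s, ∀ b ∈ s, ¬ (doubleVertexGraph (cycleG m)).Adj a b := by
  classical
  set f : Fin (m / 2) × Fin (m / 2) → {A : Finset (Fin m) // A.card = 2} :=
    fun p => mkP hm (fm (2 * p.1.val)) (fm (2 * p.2.val + 1)) with hf
  have hval1 : ∀ k : Fin (m / 2), (fm (m := m) (2 * k.val)).val = 2 * k.val :=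
    fun k => Nat.mod_eq_of_lt (by have := k.isLt; omega)
  have hval2 : ∀ k : Fin (m / 2), (fm (m := m) (2 * k.val + 1)).val = 2 * k.val + 1 :=
    fun k => Nat.mod_eq_of_lt (by have := k.isLt; omega)
  have hne : ∀ p : Fin (m / 2) × Fin (m / 2),
      fm (m := m) (2 * p.1.val) ≠ fm (2 * p.2.val + 1) := by
    intro p h
    have := congrArg Fin.val h
    rw [hval1, hval2] at this
    omega
  have hmem : ∀ P ∈ Finset.univ.image f,
      ∃ x y : Fin m, P.1 = {x, y} ∧ x.val % 2 = 0 ∧ y.val % 2 = 1 := by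
    intro P hP
    obtain ⟨p, _, rfl⟩ := Finset.mem_image.mp hP
    exact ⟨_, _, mkP_val hm (hne p), by rw [hval1]; omega, by rw [hval2]; omega⟩
  have hinj : Set.InjOn f (Finset.univ : Finset (Fin (m / 2) × Fin (m / 2))) := by
    intro p _ q _ h
    have hpair : ({fm (2 * p.1.val), fm (2 * p.2.val + 1)} : Finset (Fin m))
        = {fm (2 * q.1.val), fm (2 * q.2.val + 1)} := by
      rw [← mkP_val hm (hne p), ← mkP_val hm (hne q)]
      exact congrArg Subtype.val h
    rcases pair_eq (hne p) hpair with ⟨h1, h2⟩ | ⟨h1, h2⟩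
    · have e1 := congrArg Fin.val h1
      have e2 := congrArg Fin.val h2
      rw [hval1, hval1] at e1
      rw [hval2, hval2] at e2
      have hq1 : p.1 = q.1 := Fin.ext (by omega)
      have hq2 : p.2 = q.2 := Fin.ext (by omega)
      exact Prod.ext hq1 hq2
    · have e1 := congrArg Fin.val h1
      rw [hval1, hval2] at e1
      omega
  refine ⟨Finset.univ.image f, ?_, ?_⟩
  · rw [Finset.card_image_of_injOn hinj, Finset.card_univ, Fintype.card_prod,
      Fintype.card_fin]
    obtain ⟨v, hv⟩ : ∃ v, m = 2 * v := ⟨m / 2, by omega⟩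
    have h2 : m / 2 = v := by omega
    rw [h2, hv, show 2 * v * v = 2 * (v * v) by ring,
      Nat.mul_div_cancel_left _ (by norm_num : 0 < 2)]
  · intro P hP Q hQ hadj
    obtain ⟨w, u, v, huv, hwu, hwv, hP1, hQ1⟩ := token_adj_elim hadj
    obtain ⟨x, y, hxy, hx0, hy1⟩ := hmem P hP
    obtain ⟨x', y', hxy', hx0', hy1'⟩ := hmem Q hQ
    have hxyne : x ≠ y := fun h => by rw [h] at hx0; omega
    have hxyne' : x' ≠ y' := fun h => by rw [h] at hx0'; omega
    have hwu2 : w.val % 2 ≠ u.val % 2 := by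
      rcases pair_eq hxyne (hxy.symm.trans hP1) with ⟨h1, h2⟩ | ⟨h1, h2⟩ <;>
        rw [← h1, ← h2] <;> omega
    have hwv2 : w.val % 2 ≠ v.val % 2 := by
      rcases pair_eq hxyne' (hxy'.symm.trans hQ1) with ⟨h1, h2⟩ | ⟨h1, h2⟩ <;>
        rw [← h1, ← h2] <;> omega
    obtain ⟨hne', hrel⟩ := cycle_adj_vals hm huv
    have hu := u.isLt; have hv' := v.isLt
    omega

lemma lower_odd [NeZero m] (hm : 3 ≤ m) (hpar : m % 2 = 1) :
    ∃ s : Finset {A : Finset (Fin m) // A.card = 2}, s.card = m * (m / 2) / 2 ∧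
      ∀ a ∈ s, ∀ b ∈ s, ¬ (doubleVertexGraph (cycleG m)).Adj a b := by
  classical
  set t := m / 2 with ht
  have hmt : m = 2 * t + 1 := by omega
  have ht1 : 1 ≤ t := by omega
  set tt := if t % 2 = 1 then t else t + 1 with htt
  set Ds : Finset ℕ := (Finset.range tt).filter (fun d => d % 2 = 1) with hDs
  set f1 : Fin m × ℕ → {A : Finset (Fin m) // A.card = 2} :=
    fun p => mkP hm p.1 (fm (p.1.val + p.2)) with hf1
  set S1 := (Finset.univ ×ˢ Ds).image f1 with hS1
  set K : Finset ℕ :=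
    if t % 2 = 1 then (Finset.range (2 * t - 1)).filter (fun k => k % 2 = 0) else ∅ with hK
  set f2 : ℕ → {A : Finset (Fin m) // A.card = 2} :=
    fun k => mkP hm (fm (k * t)) (fm (k * t + t)) with hf2
  set S2 := K.image f2 with hS2
  have hDmem : ∀ d ∈ Ds, d % 2 = 1 ∧ 1 ≤ d ∧ d ≤ t ∧ (t % 2 = 1 → d < t) := by
    intro d hd
    rw [hDs, Finset.mem_filter, Finset.mem_range] at hd
    rw [htt] at hd
    split_ifs at hd <;> omega
  have hgm2 : ∀ k : ℕ, gm (fm (m := m) (k * t)) (fm (k * t + t)) = t ∧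
      fm (m := m) (k * t) ≠ fm (k * t + t) := by
    intro k
    have := gm_shift (m := m) hm (fm (k * t)) ht1 (le_of_eq ht.symm)
    rwa [fm_add] at this
  have hS1mem : ∀ P ∈ S1, ∀ w u : Fin m, P.1 = {w, u} →
      gm w u % 2 = 1 ∧ gm w u ≤ t ∧ (t % 2 = 1 → gm w u < t) := by
    intro P hP w u hP1
    obtain ⟨p, hp, rfl⟩ := Finset.mem_image.mp hP
    have hpd := hDmem p.2 (Finset.mem_product.mp hp).2
    have hsh := gm_shift (m := m) hm p.1 hpd.2.1 (by omega)
    have hpair : ({p.1, fm (p.1.val + p.2)} : Finset (Fin m)) = {w, u} := by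
      rw [← mkP_val hm hsh.2]; exact hP1
    have hwu := gm_of_pair hsh.2 hpair
    rw [hwu, hsh.1]
    exact ⟨hpd.1, hpd.2.2.1, hpd.2.2.2⟩
  have hS2mem : ∀ P ∈ S2, t % 2 = 1 ∧
      ∃ k, k % 2 = 0 ∧ k ≤ 2 * t - 2 ∧ P.1 = {fm (k * t), fm (k * t + t)} := by
    intro P hP
    obtain ⟨k, hk, rfl⟩ := Finset.mem_image.mp hP
    rw [hK] at hk
    split_ifs at hk with hto
    · rw [Finset.mem_filter, Finset.mem_range] at hk
      exact ⟨hto, k, hk.2, by omega, mkP_val hm (hgm2 k).2⟩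
    · exact absurd hk (Finset.notMem_empty k)
  have hindep : ∀ P ∈ S1 ∪ S2, ∀ Q ∈ S1 ∪ S2,
      ¬ (doubleVertexGraph (cycleG m)).Adj P Q := by
    intro P hP Q hQ hadj
    obtain ⟨w, u, v, huv, hwu, hwv, hP1, hQ1⟩ := token_adj_elim hadj
    have huvne : u ≠ v := (cycleG m).ne_of_adj huv
    have htri := gm_adj hm hwu hwv huv
    rcases Finset.mem_union.mp hP with hPs | hPs <;>
      rcases Finset.mem_union.mp hQ with hQs | hQs
    · have h1 := hS1mem P hPs w u hP1
      have h2 := hS1mem Q hQs w v hQ1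
      omega
    · have h1 := hS1mem P hPs w u hP1
      obtain ⟨hto, k, hk0, hk2, hQK⟩ := hS2mem Q hQs
      have h2 : gm w v = gm (fm (m := m) (k * t)) (fm (k * t + t)) :=
        gm_of_pair (hgm2 k).2 (hQK.symm.trans hQ1)
      have h3 := (hgm2 k).1
      omega
    · have h1 := hS1mem Q hQs w v hQ1
      obtain ⟨hto, k, hk0, hk2, hPK⟩ := hS2mem P hPs
      have h2 : gm w u = gm (fm (m := m) (k * t)) (fm (k * t + t)) :=
        gm_of_pair (hgm2 k).2 (hPK.symm.trans hP1)
      have h3 := (hgm2 k).1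
      omega
    · obtain ⟨hto, k, hk0, hk2, hPK⟩ := hS2mem P hPs
      obtain ⟨_, l, hl0, hl2, hQK⟩ := hS2mem Q hQs
      have hrw : ∀ x : ℕ, fm (m := m) (x * t + t) = fm ((x + 1) * t) :=
        fun x => by rw [show x * t + t = (x + 1) * t by ring]
      have hkm : k < m := by omega
      have hk1m : k + 1 < m := by omega
      have hlm : l < m := by omega
      have hl1m : l + 1 < m := by omega
      rcases pair_eq (hgm2 k).2 (hPK.symm.trans hP1) with ⟨hw1, hu1⟩ | ⟨hw1, hu1⟩ <;>
        rcases pair_eq (hgm2 l).2 (hQK.symm.trans hQ1) with ⟨hw2, hv2⟩ | ⟨hw2, hv2⟩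
      · have hkl : k = l := fm_mul_cancel hm hmt hkm hlm (hw1.trans hw2.symm)
        apply huvne
        rw [← hu1, ← hv2, hkl]
      · have hkl : k = l + 1 := by
          apply fm_mul_cancel hm hmt hkm hl1m
          rw [← hrw]
          exact hw1.trans hv2.symm
        omega
      · have hkl : k + 1 = l := by
          apply fm_mul_cancel hm hmt hk1m hlm
          rw [← hrw]
          exact hu1.trans hw2.symm
        omega
      · have hkl : k + 1 = l + 1 := by
          apply fm_mul_cancel hm hmt hk1m hl1m
          rw [← hrw, ← hrw]
          exact hu1.trans hv2.symm
        apply huvne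
        rw [← hw1, ← hw2, show k = l by omega]
  have hdisj : Disjoint S1 S2 := by
    rw [Finset.disjoint_left]
    intro P hP1s hP2s
    obtain ⟨hto, k, hk0, hk2, hPK⟩ := hS2mem P hP2s
    have h1 := hS1mem P hP1s (fm (k * t)) (fm (k * t + t)) hPK
    have h2 := (hgm2 k).1
    omega
  have hS1card : S1.card = m * (tt / 2) := by
    rw [hS1, Finset.card_image_of_injOn ?inj, Finset.card_product, Finset.card_univ,
      Fintype.card_fin, hDs, card_range_filter_odd]
    case inj =>
      intro p hp q hq h
      have hp' := Finset.mem_coe.mp hp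
      have hq' := Finset.mem_coe.mp hq
      have hpd := hDmem p.2 (Finset.mem_product.mp hp').2
      have hqd := hDmem q.2 (Finset.mem_product.mp hq').2
      have hshp := gm_shift (m := m) hm p.1 hpd.2.1 (by omega)
      have hshq := gm_shift (m := m) hm q.1 hqd.2.1 (by omega)
      have hpair : ({p.1, fm (p.1.val + p.2)} : Finset (Fin m))
          = {q.1, fm (q.1.val + q.2)} := by
        rw [← mkP_val hm hshp.2, ← mkP_val hm hshq.2]
        exact congrArg Subtype.val h
      have hdd : q.2 = p.2 := by
        have h0 := gm_of_pair hshp.2 hpair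
        rw [hshp.1, hshq.1] at h0
        exact h0
      rcases pair_eq hshp.2 hpair with ⟨h1, h2⟩ | ⟨h1, h2⟩
      · exact Prod.ext h1 hdd.symm
      · exfalso
        have e1 := congrArg Fin.val h1
        have e2 := congrArg Fin.val h2
        rw [fm_val] at e1 e2
        have hplt := p.1.isLt
        have e3 : (p.1.val + p.2 + p.2) % m = p.1.val := by
          calc (p.1.val + p.2 + p.2) % m = ((p.1.val + p.2) % m + p.2) % m := by
                rw [Nat.mod_add_mod]
            _ = (q.1.val + q.2) % m := by rw [e2, hdd]
            _ = p.1.val := e1.symm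
        have hmod : (p.1.val + p.2 + p.2) % m
            = if p.1.val + p.2 + p.2 < m then p.1.val + p.2 + p.2
              else p.1.val + p.2 + p.2 - m := by
          split_ifs with hc
          · exact Nat.mod_eq_of_lt hc
          · rw [Nat.mod_eq_sub_mod (le_of_not_gt hc)]
            exact Nat.mod_eq_of_lt (by omega)
        rw [hmod] at e3
        split_ifs at e3 <;> omega
  have hS2card : S2.card = if t % 2 = 1 then t else 0 := by
    rw [hS2, hK]
    split_ifs with hto
    · rw [Finset.card_image_of_injOn ?injk, card_range_filter_even]
      · omega
      case injk =>
        intro k hk l hl h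
        have hk' := Finset.mem_coe.mp hk
        have hl' := Finset.mem_coe.mp hl
        rw [Finset.mem_filter, Finset.mem_range] at hk' hl'
        have hpair : ({fm (k * t), fm (k * t + t)} : Finset (Fin m))
            = {fm (l * t), fm (l * t + t)} := by
          rw [← mkP_val hm (hgm2 k).2, ← mkP_val hm (hgm2 l).2]
          exact congrArg Subtype.val h
        have hrw : ∀ x : ℕ, fm (m := m) (x * t + t) = fm ((x + 1) * t) :=
          fun x => by rw [show x * t + t = (x + 1) * t by ring]
        rcases pair_eq (hgm2 k).2 hpair with ⟨h1, h2⟩ | ⟨h1, h2⟩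
        · exact fm_mul_cancel hm hmt (by omega) (by omega) h1
        · exfalso
          have hkl : k = l + 1 :=
            fm_mul_cancel hm hmt (by omega) (by omega) (h1.trans (hrw l))
          have hlk : k + 1 = l :=
            fm_mul_cancel hm hmt (by omega) (by omega) ((hrw k).symm.trans h2)
          omega
    · simp
  refine ⟨S1 ∪ S2, ?_, hindep⟩
  rw [Finset.card_union_of_disjoint hdisj, hS1card, hS2card]
  rcases Nat.mod_two_eq_zero_or_one t with hte | hto
  · obtain ⟨u, hu⟩ : ∃ u, t = 2 * u := ⟨t / 2, by omega⟩
    have h1 : tt = t + 1 := by rw [htt, if_neg (by omega)]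
    have h2 : tt / 2 = u := by omega
    have h3 : m * t = 2 * (m * u) := by rw [hu]; ring
    rw [h2, if_neg (by omega), h3, Nat.mul_div_cancel_left _ (by norm_num : 0 < 2)]
    omega
  · obtain ⟨u, hu⟩ : ∃ u, t = 2 * u + 1 := ⟨t / 2, by omega⟩
    have h1 : tt = t := by rw [htt, if_pos hto]
    have h2 : tt / 2 = u := by omega
    have h3 : m * t = 2 * (m * u + t) + 1 := by rw [hmt, hu]; ring
    have h4 : (2 * (m * u + t) + 1) / 2 = m * u + t := by omega
    rw [h2, if_pos hto, h3, h4]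

end TCyc

/-- For every integer `m ≥ 3`, the independence number of the double vertex graph of
the cycle `C_m` equals `⌊(m/2)·⌊m/2⌋⌋`. -/
theorem indepNum_doubleVertexGraph_cycle (m : ℕ) (hm : 3 ≤ m) :
    indepNum (doubleVertexGraph (cycleG m)) = m * (m / 2) / 2 := by
  haveI : NeZero m := ⟨by omega⟩
  apply TCyc.indepNum_eq
  · rcases Nat.mod_two_eq_zero_or_one m with h | h
    · exact TCyc.lower_even hm h
    · exact TCyc.lower_odd hm h
  · exact fun s hs => TCyc.upper_bound hm s hs
end
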